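/- arXiv:2509.18389 — 2 statements merged into one kernel-verified Lean document; each statement's English description precedes it below -/
import Mathlib

section
/- For every L ≥ 0 and every probability vector ρ ∈ ℝ^n (entries nonnegative, summing to 1), the expected Monte Carlo semi-gradient of the looped L-layer Transformer at the TD parameters satisfies the quantitative bound ‖ Σ_{ω=1}^n ρ_ω ( v_ω − F_L^{(ω)}(A^TD, 0) ) g_L(ω) ‖_1 ≤ ‖v‖_∞ γ^L ( ((L² + L)/2) ν + L ξ ), where v_ω (the ω-th entry of the value vector) equals the expected Monte Carlo return from state ω, ν = 2n(n(1+γ)²‖v‖_∞ + (1+γ)²), and ξ = 2n(1+γ). -/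
open Matrix Filter Topology

noncomputable section

/-- Index type for `2n` rows (two stacked copies of the feature dimension). -/
abbrev TwoN (n : ℕ) := Fin n ⊕ Fin n
/-- Row index type for prompts: `2n + 1`. -/
abbrev RIdx (n : ℕ) := TwoN n ⊕ Unit
/-- Column index type for prompts: `n + 1` (context columns plus the query column). -/
abbrev CIdx (n : ℕ) := Fin n ⊕ Unit

/-- The mask `M = [[I_n, 0],[0, 0]]`. -/
def maskM (n : ℕ) : Matrix (CIdx n) (CIdx n) ℝ := Matrix.fromBlocks 1 0 0 0

/-- One linear attention layer `Z ↦ Z + P̃ Z M (Zᵀ Q̃ Z)`. -/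
def attnLayer (n : ℕ) (Pm Qm : Matrix (RIdx n) (RIdx n) ℝ)
    (Z : Matrix (RIdx n) (CIdx n) ℝ) : Matrix (RIdx n) (CIdx n) ℝ :=
  Z + Pm * Z * maskM n * (Zᵀ * Qm * Z)

/-- `P̃ = [[0, 0],[u, 1]]`. -/
def Pmat (n : ℕ) (u : Matrix Unit (TwoN n) ℝ) : Matrix (RIdx n) (RIdx n) ℝ :=
  Matrix.fromBlocks 0 0 u 1

/-- `Q̃ = [[A, 0],[0, 0]]`. -/
def Qmat (n : ℕ) (A : Matrix (TwoN n) (TwoN n) ℝ) : Matrix (RIdx n) (RIdx n) ℝ :=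
  Matrix.fromBlocks A 0 0 0

/-- `A^TD = [[-I, I],[0, 0]]`. -/
def Atd (n : ℕ) : Matrix (TwoN n) (TwoN n) ℝ := Matrix.fromBlocks (-1) 1 0 0

/-- A row-stochastic matrix. -/
def RowStochastic {n : ℕ} (P : Matrix (Fin n) (Fin n) ℝ) : Prop :=
  (∀ i k, 0 ≤ P i k) ∧ ∀ i, ∑ k, P i k = 1

/-- TD iterates `w_0 = 0`, `w_{l+1} = r + γ P w_l`. -/
def tdW {n : ℕ} (γ : ℝ) (P : Matrix (Fin n) (Fin n) ℝ) (r : Fin n → ℝ) : ℕ → Fin n → ℝ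
  | 0 => 0
  | l + 1 => r + γ • P.mulVec (tdW γ P r l)

/-- The value vector `v = (I - γ P)⁻¹ r`. -/
def valueV {n : ℕ} (γ : ℝ) (P : Matrix (Fin n) (Fin n) ℝ) (r : Fin n → ℝ) : Fin n → ℝ :=
  ((1 : Matrix (Fin n) (Fin n) ℝ) - γ • P)⁻¹.mulVec r

/-- The prompt `Z_0(j)`: the `i`-th column is `(e_i, γ Pᵀ e_i, r_i)` and the query
column is `(e_j, 0, 0)`. -/
def prompt {n : ℕ} (γ : ℝ) (P : Matrix (Fin n) (Fin n) ℝ) (r : Fin n → ℝ) (j : Fin n) :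
    Matrix (RIdx n) (CIdx n) ℝ := fun p q =>
  match p, q with
  | Sum.inl (Sum.inl k), Sum.inl i => if k = i then 1 else 0
  | Sum.inl (Sum.inr k), Sum.inl i => γ * P i k
  | Sum.inr _, Sum.inl i => r i
  | Sum.inl (Sum.inl k), Sum.inr _ => if k = j then 1 else 0
  | Sum.inl (Sum.inr _), Sum.inr _ => 0
  | Sum.inr _, Sum.inr _ => 0

/-- Embeddings `Z_l` of the looped transformer with shared parameters `(A, u)`,
starting from the prompt `Z_0(j)`. -/
def embed {n : ℕ} (γ : ℝ) (P : Matrix (Fin n) (Fin n) ℝ) (r : Fin n → ℝ) (j : Fin n)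
    (A : Matrix (TwoN n) (TwoN n) ℝ) (u : Matrix Unit (TwoN n) ℝ) :
    ℕ → Matrix (RIdx n) (CIdx n) ℝ
  | 0 => prompt γ P r j
  | l + 1 => attnLayer n (Pmat n u) (Qmat n A) (embed γ P r j A u l)

/-- Looped `L`-layer transformer output `F_L^{(j)}(A, u) = -(Z_L)_{2n+1, n+1}`. -/
def tfOut {n : ℕ} (γ : ℝ) (P : Matrix (Fin n) (Fin n) ℝ) (r : Fin n → ℝ) (j : Fin n)
    (A : Matrix (TwoN n) (TwoN n) ℝ) (u : Matrix Unit (TwoN n) ℝ) (L : ℕ) : ℝ :=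
  -(embed γ P r j A u L (Sum.inr ()) (Sum.inr ()))

/-- `TF_L(Z_0(j); θ_L^TD)`: the transformer output with the TD parameters. -/
def tfTD {n : ℕ} (γ : ℝ) (P : Matrix (Fin n) (Fin n) ℝ) (r : Fin n → ℝ) (j : Fin n) (L : ℕ) : ℝ :=
  tfOut γ P r j (Atd n) 0 L

/-- `X ∈ ℝ^{2n×n}`: the `i`-th column is `(e_i, γ Pᵀ e_i)`. -/
def Xmat {n : ℕ} (γ : ℝ) (P : Matrix (Fin n) (Fin n) ℝ) : Matrix (TwoN n) (Fin n) ℝ :=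
  fun p i => match p with
  | Sum.inl k => if k = i then 1 else 0
  | Sum.inr k => γ * P i k

/-- The query vector `x^q = (e_ω, 0) ∈ ℝ^{2n}`. -/
def xqv {n : ℕ} (ω : Fin n) : TwoN n → ℝ := fun p =>
  match p with
  | Sum.inl k => if k = ω then 1 else 0
  | Sum.inr _ => 0

/-- Operator norm induced by the ℓ1 vector norm: maximum absolute column sum. -/
def matL1 {m k : Type*} [Fintype m] [Fintype k] (B : Matrix m k ℝ) : ℝ :=
  ⨆ j, ∑ i, |B i j|

/-- `G_0^{(i)} = 0`, `G_{l+1}^{(i)} = X (r - w_l) (X e_i)ᵀ + γ Σ_j P_{ij} G_l^{(j)}`. -/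
def Gseq {n : ℕ} (γ : ℝ) (P : Matrix (Fin n) (Fin n) ℝ) (r : Fin n → ℝ) :
    ℕ → Fin n → Matrix (TwoN n) (TwoN n) ℝ
  | 0 => fun _ => 0
  | l + 1 => fun i =>
      Matrix.vecMulVec ((Xmat γ P).mulVec (r - tdW γ P r l)) ((Xmat γ P).mulVec (Pi.single i 1))
        + γ • ∑ j, P i j • Gseq γ P r l j

/-- `H_0 = 0`, `H_{l+1} = H_l + X (r - w_l) (x^q)ᵀ - G_l^{(ω)}`. -/
def Hseq {n : ℕ} (γ : ℝ) (P : Matrix (Fin n) (Fin n) ℝ) (r : Fin n → ℝ) (ω : Fin n) :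
    ℕ → Matrix (TwoN n) (TwoN n) ℝ
  | 0 => 0
  | l + 1 => Hseq γ P r ω l
      + Matrix.vecMulVec ((Xmat γ P).mulVec (r - tdW γ P r l)) (xqv ω)
      - Gseq γ P r l ω

/-- `U_0 = 0`, `U_{l+1} = X Xᵀ A^TD X + γ U_l Pᵀ`. -/
def Useq {n : ℕ} (γ : ℝ) (P : Matrix (Fin n) (Fin n) ℝ) : ℕ → Matrix (TwoN n) (Fin n) ℝ
  | 0 => 0
  | l + 1 => Xmat γ P * (Xmat γ P)ᵀ * Atd n * Xmat γ P + γ • (Useq γ P l * Pᵀ)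

/-- `h_0 = 0`, `h_{l+1} = h_l + X Xᵀ A^TD x^q + U_l Xᵀ A^TD x^q`. -/
def hseq {n : ℕ} (γ : ℝ) (P : Matrix (Fin n) (Fin n) ℝ) (ω : Fin n) : ℕ → TwoN n → ℝ
  | 0 => 0
  | l + 1 => hseq γ P ω l
      + (Xmat γ P * (Xmat γ P)ᵀ * Atd n).mulVec (xqv ω)
      + (Useq γ P l * (Xmat γ P)ᵀ * Atd n).mulVec (xqv ω)

/-- `g_L(j)`: the vector of all partial derivatives of `F_L^{(j)}` with respect to the
entries of `A` and of `u`, evaluated at the TD parameters `(A^TD, 0)`. -/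
def gvec {n : ℕ} (γ : ℝ) (P : Matrix (Fin n) (Fin n) ℝ) (r : Fin n → ℝ) (L : ℕ) (j : Fin n) :
    (TwoN n × TwoN n) ⊕ TwoN n → ℝ
  | Sum.inl ab => deriv (fun t : ℝ =>
      tfOut γ P r j (Atd n + t • Matrix.single ab.1 ab.2 1) 0 L) 0
  | Sum.inr k => deriv (fun t : ℝ =>
      tfOut γ P r j (Atd n) (t • Matrix.single () k 1) L) 0




variable {n : ℕ}

/-- top block of the prompt -/
def Ymat (γ : ℝ) (P : Matrix (Fin n) (Fin n) ℝ) (ω : Fin n) : Matrix (TwoN n) (CIdx n) ℝ :=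
  fun p q => match p, q with
  | Sum.inl k, Sum.inl i => if k = i then 1 else 0
  | Sum.inr k, Sum.inl i => γ * P i k
  | Sum.inl k, Sum.inr _ => if k = ω then 1 else 0
  | Sum.inr _, Sum.inr _ => 0

/-- bottom row of the prompt -/
def brow (r : Fin n → ℝ) : Matrix Unit (CIdx n) ℝ := fun _ => Sum.elim r 0

lemma prompt_eq (γ : ℝ) (P : Matrix (Fin n) (Fin n) ℝ) (r : Fin n → ℝ) (ω : Fin n) :
    prompt γ P r ω = Matrix.fromRows (Ymat γ P ω) (brow r) := by
  ext p q
  rcases p with (k | k) | u <;> rcases q with i | u' <;>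
    simp [prompt, Ymat, brow, Matrix.fromRows_apply_inl, Matrix.fromRows_apply_inr]

lemma fromRows_add {m₁ m₂ k : Type*} (A C : Matrix m₁ k ℝ) (B D : Matrix m₂ k ℝ) :
    Matrix.fromRows A B + Matrix.fromRows C D = Matrix.fromRows (A + C) (B + D) := by
  ext (i | i) j <;> simp [Matrix.fromRows_apply_inl, Matrix.fromRows_apply_inr]

/-- the key sandwich matrix -/
def Km (γ : ℝ) (P : Matrix (Fin n) (Fin n) ℝ) (ω : Fin n) (A : Matrix (TwoN n) (TwoN n) ℝ) :
    Matrix (CIdx n) (CIdx n) ℝ := (Ymat γ P ω)ᵀ * A * Ymat γ P ω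

lemma attn_step (γ : ℝ) (P : Matrix (Fin n) (Fin n) ℝ) (ω : Fin n)
    (A : Matrix (TwoN n) (TwoN n) ℝ) (u : Matrix Unit (TwoN n) ℝ)
    (b : Matrix Unit (CIdx n) ℝ) :
    attnLayer n (Pmat n u) (Qmat n A) (Matrix.fromRows (Ymat γ P ω) b) =
      Matrix.fromRows (Ymat γ P ω)
        (b + (u * Ymat γ P ω + b) * (maskM n * Km γ P ω A)) := by
  set Y := Ymat γ P ω
  have h1 : Pmat n u * Matrix.fromRows Y b = Matrix.fromRows 0 (u * Y + b) := by
    rw [Pmat, Matrix.fromBlocks_mul_fromRows]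
    simp
  have h2 : (Matrix.fromRows Y b)ᵀ * Qmat n A * Matrix.fromRows Y b = Km γ P ω A := by
    rw [Matrix.transpose_fromRows, Qmat, Matrix.fromCols_mul_fromBlocks,
      Matrix.fromCols_mul_fromRows]
    simp [Km, Matrix.mul_assoc]
    rfl
  rw [attnLayer, h1, h2, Matrix.fromRows_mul, Matrix.fromRows_mul]
  rw [fromRows_add, ← Matrix.mul_assoc]
  simp

/-- bottom-row recursion -/
def bseq (γ : ℝ) (P : Matrix (Fin n) (Fin n) ℝ) (r : Fin n → ℝ) (ω : Fin n)
    (A : Matrix (TwoN n) (TwoN n) ℝ) (u : Matrix Unit (TwoN n) ℝ) :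
    ℕ → Matrix Unit (CIdx n) ℝ
  | 0 => brow r
  | l + 1 => bseq γ P r ω A u l +
      (u * Ymat γ P ω + bseq γ P r ω A u l) * (maskM n * Km γ P ω A)

lemma embed_eq (γ : ℝ) (P : Matrix (Fin n) (Fin n) ℝ) (r : Fin n → ℝ) (ω : Fin n)
    (A : Matrix (TwoN n) (TwoN n) ℝ) (u : Matrix Unit (TwoN n) ℝ) (l : ℕ) :
    embed γ P r ω A u l = Matrix.fromRows (Ymat γ P ω) (bseq γ P r ω A u l) := by
  induction l with
  | zero => exact prompt_eq γ P r ω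
  | succ l ih => rw [embed, ih, attn_step]; rfl

lemma tfOut_eq (γ : ℝ) (P : Matrix (Fin n) (Fin n) ℝ) (r : Fin n → ℝ) (ω : Fin n)
    (A : Matrix (TwoN n) (TwoN n) ℝ) (u : Matrix Unit (TwoN n) ℝ) (L : ℕ) :
    tfOut γ P r ω A u L = -(bseq γ P r ω A u L () (Sum.inr ())) := by
  rw [tfOut, embed_eq]; rfl

/-- one-step matrix -/
def Sm (γ : ℝ) (P : Matrix (Fin n) (Fin n) ℝ) (ω : Fin n) (A : Matrix (TwoN n) (TwoN n) ℝ) :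
    Matrix (CIdx n) (CIdx n) ℝ := 1 + maskM n * Km γ P ω A

lemma bseq_zero_u (γ : ℝ) (P : Matrix (Fin n) (Fin n) ℝ) (r : Fin n → ℝ) (ω : Fin n)
    (A : Matrix (TwoN n) (TwoN n) ℝ) (l : ℕ) :
    bseq γ P r ω A 0 l = brow r * (Sm γ P ω A) ^ l := by
  induction l with
  | zero => simp [bseq]
  | succ l ih =>
      rw [bseq, ih, pow_succ, ← Matrix.mul_assoc, Sm]
      rw [Matrix.mul_add, Matrix.mul_one, Matrix.mul_add]
      simp [Matrix.mul_assoc]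

/-- explicit form of `Sm` at `Atd` -/
def Sexp (γ : ℝ) (P : Matrix (Fin n) (Fin n) ℝ) (ω : Fin n) : Matrix (CIdx n) (CIdx n) ℝ :=
  fun p q => match p, q with
  | Sum.inl i, Sum.inl j => γ * P j i
  | Sum.inl i, Sum.inr _ => -(if i = ω then 1 else 0)
  | Sum.inr _, Sum.inl _ => 0
  | Sum.inr _, Sum.inr _ => 1

lemma Sm_Atd (γ : ℝ) (P : Matrix (Fin n) (Fin n) ℝ) (ω : Fin n) :
    Sm γ P ω (Atd n) = Sexp γ P ω := by
  ext p q
  rcases p with i | u <;> rcases q with j | u' <;>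
    simp [Sm, Km, maskM, Atd, Ymat, Sexp, Matrix.mul_apply, Matrix.fromBlocks,
      Fintype.sum_sum_type, Matrix.one_apply, mul_ite, ite_mul,
      Finset.sum_ite_eq, Finset.sum_ite_eq']
  · by_cases h : i = j <;> simp [h]
    exact fun hji => absurd hji.symm h
-- ======== entry lemmas for Sexp ========

variable {γ : ℝ} {P : Matrix (Fin n) (Fin n) ℝ} {r : Fin n → ℝ} {ω : Fin n}

lemma mul_Sexp_inl {m : Type*} [Fintype m] (B : Matrix m (CIdx n) ℝ) (p : m) (j : Fin n) :
    (B * Sexp γ P ω) p (Sum.inl j) = γ * ∑ i, B p (Sum.inl i) * P j i := by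
  rw [Matrix.mul_apply, Fintype.sum_sum_type]
  simp [Sexp, Finset.mul_sum]
  ring_nf
  exact Finset.sum_congr rfl fun i _ => by ring

lemma mul_Sexp_inr {m : Type*} [Fintype m] (B : Matrix m (CIdx n) ℝ) (p : m) :
    (B * Sexp γ P ω) p (Sum.inr ()) = B p (Sum.inr ()) - B p (Sum.inl ω) := by
  rw [Matrix.mul_apply, Fintype.sum_sum_type]
  simp [Sexp, mul_ite, Finset.sum_ite_eq', sub_eq_neg_add]

lemma Sexp_pow_bot (k : ℕ) :
    (∀ j, ((Sexp γ P ω) ^ k) (Sum.inr ()) (Sum.inl j) = 0) ∧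
      ((Sexp γ P ω) ^ k) (Sum.inr ()) (Sum.inr ()) = 1 := by
  induction k with
  | zero => simp [Matrix.one_apply]
  | succ k ih =>
      rw [pow_succ]
      refine ⟨fun j => ?_, ?_⟩
      · rw [mul_Sexp_inl]
        simp [ih.1]
      · rw [mul_Sexp_inr, ih.1, ih.2, sub_zero]

section bounds
variable (hP : RowStochastic P) (hγ0 : 0 ≤ γ) (hγ1 : γ ≤ 1)
include hP hγ0 hγ1

lemma Sexp_pow_ctx_col (k : ℕ) (j : Fin n) :
    ∑ i, |((Sexp γ P ω) ^ k) (Sum.inl i) (Sum.inl j)| ≤ 1 := by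
  induction k generalizing j with
  | zero =>
      simp only [pow_zero, Matrix.one_apply]
      simp [apply_ite abs, Finset.sum_ite_eq]
  | succ k ih =>
      rw [pow_succ]
      have h1 : ∀ i : Fin n, |((Sexp γ P ω) ^ k * Sexp γ P ω) (Sum.inl i) (Sum.inl j)|
          ≤ γ * ∑ m, |((Sexp γ P ω) ^ k) (Sum.inl i) (Sum.inl m)| * P j m := by
        intro i
        rw [mul_Sexp_inl, abs_mul, abs_of_nonneg hγ0]
        refine mul_le_mul_of_nonneg_left ?_ hγ0
        refine (Finset.abs_sum_le_sum_abs _ _).trans (le_of_eq ?_)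
        exact Finset.sum_congr rfl fun m _ => by
          rw [abs_mul, abs_of_nonneg (hP.1 j m)]
      calc ∑ i, |((Sexp γ P ω) ^ k * Sexp γ P ω) (Sum.inl i) (Sum.inl j)|
          ≤ ∑ i, γ * ∑ m, |((Sexp γ P ω) ^ k) (Sum.inl i) (Sum.inl m)| * P j m :=
            Finset.sum_le_sum fun i _ => h1 i
        _ = γ * ∑ m, (∑ i, |((Sexp γ P ω) ^ k) (Sum.inl i) (Sum.inl m)|) * P j m := by
            rw [← Finset.mul_sum, Finset.sum_comm]
            congr 1
            exact Finset.sum_congr rfl fun m _ => by rw [Finset.sum_mul]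
        _ ≤ γ * ∑ m, 1 * P j m := by
            refine mul_le_mul_of_nonneg_left (Finset.sum_le_sum fun m _ => ?_) hγ0
            exact mul_le_mul_of_nonneg_right (ih m) (hP.1 j m)
        _ ≤ 1 := by
            simp only [one_mul, hP.2 j, mul_one]
            exact hγ1

lemma Sexp_pow_ctx_qcol (k : ℕ) :
    ∑ i, |((Sexp γ P ω) ^ k) (Sum.inl i) (Sum.inr ())| ≤ (k : ℝ) := by
  induction k with
  | zero => simp [Matrix.one_apply]
  | succ k ih =>
      rw [pow_succ]
      have h1 : ∀ i : Fin n, |((Sexp γ P ω) ^ k * Sexp γ P ω) (Sum.inl i) (Sum.inr ())|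
          ≤ |((Sexp γ P ω) ^ k) (Sum.inl i) (Sum.inr ())| +
            |((Sexp γ P ω) ^ k) (Sum.inl i) (Sum.inl ω)| := by
        intro i
        rw [mul_Sexp_inr]
        exact abs_sub _ _
      calc ∑ i, |((Sexp γ P ω) ^ k * Sexp γ P ω) (Sum.inl i) (Sum.inr ())|
          ≤ ∑ i, (|((Sexp γ P ω) ^ k) (Sum.inl i) (Sum.inr ())| +
              |((Sexp γ P ω) ^ k) (Sum.inl i) (Sum.inl ω)|) :=
            Finset.sum_le_sum fun i _ => h1 i
        _ = (∑ i, |((Sexp γ P ω) ^ k) (Sum.inl i) (Sum.inr ())|) +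
              ∑ i, |((Sexp γ P ω) ^ k) (Sum.inl i) (Sum.inl ω)| := Finset.sum_add_distrib
        _ ≤ (k : ℝ) + 1 := add_le_add ih (Sexp_pow_ctx_col hP hγ0 hγ1 k ω)
        _ = ((k + 1 : ℕ) : ℝ) := by push_cast; ring

lemma brow_pow_bound {C : ℝ} (hC : ∀ i, |r i| ≤ C) (m : ℕ) (j : Fin n) :
    |(brow r * (Sexp γ P ω) ^ m) () (Sum.inl j)| ≤ C := by
  induction m generalizing j with
  | zero => simpa [brow] using hC j
  | succ m ih =>
      rw [pow_succ, ← Matrix.mul_assoc, mul_Sexp_inl]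
      have hC0 : 0 ≤ C := le_trans (abs_nonneg _) (hC j)
      rw [abs_mul, abs_of_nonneg hγ0]
      calc γ * |∑ i, (brow r * (Sexp γ P ω) ^ m) () (Sum.inl i) * P j i|
          ≤ γ * ∑ i, C * P j i := by
            refine mul_le_mul_of_nonneg_left ?_ hγ0
            refine (Finset.abs_sum_le_sum_abs _ _).trans (Finset.sum_le_sum fun i _ => ?_)
            rw [abs_mul, abs_of_nonneg (hP.1 j i)]
            exact mul_le_mul_of_nonneg_right (ih i) (hP.1 j i)
        _ = γ * C := by rw [← Finset.mul_sum, hP.2 j, mul_one]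
        _ ≤ 1 * C := mul_le_mul_of_nonneg_right hγ1 hC0
        _ = C := one_mul C

end bounds

lemma brow_pow_td (γ : ℝ) (P : Matrix (Fin n) (Fin n) ℝ) (r : Fin n → ℝ) (ω : Fin n) (L : ℕ) :
    (∀ j, (brow r * (Sexp γ P ω) ^ L) () (Sum.inl j)
        = tdW γ P r (L + 1) j - tdW γ P r L j) ∧
      (brow r * (Sexp γ P ω) ^ L) () (Sum.inr ()) = -(tdW γ P r L ω) := by
  induction L with
  | zero => simp [brow, tdW]
  | succ L ih =>
      rw [pow_succ, ← Matrix.mul_assoc]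
      constructor
      · intro j
        rw [mul_Sexp_inl]
        have : ∀ i, (brow r * (Sexp γ P ω) ^ L) () (Sum.inl i)
            = tdW γ P r (L + 1) i - tdW γ P r L i := ih.1
        simp only [this]
        show γ * ∑ i, (tdW γ P r (L+1) i - tdW γ P r L i) * P j i
            = tdW γ P r (L + 2) j - tdW γ P r (L + 1) j
        rw [show tdW γ P r (L + 2) = r + γ • P.mulVec (tdW γ P r (L+1)) from rfl,
            show tdW γ P r (L + 1) = r + γ • P.mulVec (tdW γ P r L) from rfl]
        simp only [Pi.add_apply, Pi.smul_apply, smul_eq_mul, Matrix.mulVec, dotProduct]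
        rw [add_sub_add_left_eq_sub, ← mul_sub, ← Finset.sum_sub_distrib]
        congr 1
        exact Finset.sum_congr rfl fun i _ => by ring
      · rw [mul_Sexp_inr, ih.2, ih.1 ω]
        ring

lemma Ymat_colsum (hP : RowStochastic P) (hγ0 : 0 ≤ γ) (q : CIdx n) :
    ∑ a : TwoN n, |Ymat γ P ω a q| ≤ 1 + γ := by
  rw [Fintype.sum_sum_type]
  rcases q with i | u
  · have h1 : ∑ k : Fin n, |Ymat γ P ω (Sum.inl k) (Sum.inl i)| = 1 := by
      simp [Ymat, apply_ite abs, Finset.sum_ite_eq]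
    have h2 : ∑ k : Fin n, |Ymat γ P ω (Sum.inr k) (Sum.inl i)| = γ := by
      simp only [Ymat]
      have habs : ∀ k : Fin n, |γ * P i k| = γ * P i k := fun k => by
        rw [abs_of_nonneg (mul_nonneg hγ0 (hP.1 i k))]
      simp only [habs]
      rw [← Finset.mul_sum, hP.2 i, mul_one]
    rw [h1, h2]
  · have h1 : ∑ k : Fin n, |Ymat γ P ω (Sum.inl k) (Sum.inr u)| = 1 := by
      simp [Ymat, apply_ite abs, Finset.sum_ite_eq]
    have h2 : ∑ k : Fin n, |Ymat γ P ω (Sum.inr k) (Sum.inr u)| = 0 := by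
      simp [Ymat]
    rw [h1, h2]
    linarith

lemma mul_maskM_inl (B : Matrix Unit (CIdx n) ℝ) (i : Fin n) :
    (B * maskM n) () (Sum.inl i) = B () (Sum.inl i) := by
  rw [Matrix.mul_apply, Fintype.sum_sum_type]
  simp [maskM, Matrix.fromBlocks, Matrix.one_apply, mul_ite, Finset.sum_ite_eq']

lemma mul_maskM_inr (B : Matrix Unit (CIdx n) ℝ) :
    (B * maskM n) () (Sum.inr ()) = 0 := by
  rw [Matrix.mul_apply, Fintype.sum_sum_type]
  simp [maskM, Matrix.fromBlocks]
-- ======== value vector facts ========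

section valuefacts
variable (hn : 1 ≤ n) (hγ0 : 0 ≤ γ) (hγ1 : γ < 1) (hP : RowStochastic P)

include hn hγ0 hγ1 hP in
lemma valueV_fix : valueV γ P r = r + γ • P.mulVec (valueV γ P r) := by
  have hne : Nonempty (Fin n) := Fin.pos_iff_nonempty.mp hn
  set A : Matrix (Fin n) (Fin n) ℝ := (1 : Matrix (Fin n) (Fin n) ℝ) - γ • P with hA
  have hdet : A.det ≠ 0 := by
    intro h
    obtain ⟨x, hx0, hx⟩ := (Matrix.exists_mulVec_eq_zero_iff).mpr h
    rw [hA, Matrix.sub_mulVec, Matrix.one_mulVec, Matrix.smul_mulVec] at hx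
    have hfix : ∀ i, x i = γ * ∑ j, P i j * x j := by
      intro i
      have := congrFun hx i
      simp only [Pi.sub_apply, Pi.smul_apply, smul_eq_mul, Matrix.mulVec, dotProduct,
        Pi.zero_apply] at this
      linarith [this]
    obtain ⟨i, -, hi⟩ := Finset.exists_max_image Finset.univ (fun i => |x i|)
      ⟨Classical.arbitrary (Fin n), Finset.mem_univ _⟩
    have hipos : 0 < |x i| := by
      obtain ⟨j, hj⟩ := Function.ne_iff.mp hx0
      have : 0 < |x j| := abs_pos.mpr hj
      exact lt_of_lt_of_le this (hi j (Finset.mem_univ j))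
    have : |x i| ≤ γ * |x i| := by
      calc |x i| = γ * |∑ j, P i j * x j| := by rw [hfix i, abs_mul, abs_of_nonneg hγ0]
        _ ≤ γ * ∑ j, P i j * |x i| := by
            refine mul_le_mul_of_nonneg_left ?_ hγ0
            refine (Finset.abs_sum_le_sum_abs _ _).trans (Finset.sum_le_sum fun j _ => ?_)
            rw [abs_mul, abs_of_nonneg (hP.1 i j)]
            exact mul_le_mul_of_nonneg_left (hi j (Finset.mem_univ j)) (hP.1 i j)
        _ = γ * |x i| := by rw [← Finset.sum_mul, hP.2 i, one_mul]
    nlinarith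
  have hu : IsUnit A.det := isUnit_iff_ne_zero.mpr hdet
  have hAv : A.mulVec (valueV γ P r) = r := by
    rw [valueV, Matrix.mulVec_mulVec, Matrix.mul_nonsing_inv A hu, Matrix.one_mulVec]
  have := hAv
  rw [hA, Matrix.sub_mulVec, Matrix.one_mulVec, Matrix.smul_mulVec] at this
  funext i
  have := congrFun this i
  simp only [Pi.sub_apply, Pi.smul_apply, Pi.add_apply, smul_eq_mul] at this ⊢
  linarith

include hn hγ0 hγ1 hP in
lemma r_bound (i : Fin n) : |r i| ≤ (1 + γ) * ‖valueV γ P r‖ := by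
  have hfix := congrFun (valueV_fix (γ := γ) (P := P) (r := r) hn hγ0 hγ1 hP) i
  simp only [Pi.add_apply, Pi.smul_apply, smul_eq_mul, Matrix.mulVec, dotProduct] at hfix
  have hv : ∀ j, |valueV γ P r j| ≤ ‖valueV γ P r‖ := fun j => by
    simpa using norm_le_pi_norm (valueV γ P r) j
  have h2 : |γ * ∑ j, P i j * valueV γ P r j| ≤ γ * ‖valueV γ P r‖ := by
    rw [abs_mul, abs_of_nonneg hγ0]
    refine mul_le_mul_of_nonneg_left ?_ hγ0
    calc |∑ j, P i j * valueV γ P r j| ≤ ∑ j, P i j * ‖valueV γ P r‖ := by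
          refine (Finset.abs_sum_le_sum_abs _ _).trans (Finset.sum_le_sum fun j _ => ?_)
          rw [abs_mul, abs_of_nonneg (hP.1 i j)]
          exact mul_le_mul_of_nonneg_left (hv j) (hP.1 i j)
      _ = ‖valueV γ P r‖ := by rw [← Finset.sum_mul, hP.2 i, one_mul]
  have : r i = valueV γ P r i - γ * ∑ j, P i j * valueV γ P r j := by linarith
  rw [this]
  calc |valueV γ P r i - γ * ∑ j, P i j * valueV γ P r j|
      ≤ |valueV γ P r i| + |γ * ∑ j, P i j * valueV γ P r j| := abs_sub _ _
    _ ≤ ‖valueV γ P r‖ + γ * ‖valueV γ P r‖ := add_le_add (hv i) h2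
    _ = (1 + γ) * ‖valueV γ P r‖ := by ring

include hn hγ0 hγ1 hP in
lemma td_value_bound (L : ℕ) (i : Fin n) :
    |valueV γ P r i - tdW γ P r L i| ≤ γ ^ L * ‖valueV γ P r‖ := by
  induction L generalizing i with
  | zero =>
      simp only [tdW, Pi.zero_apply, sub_zero, pow_zero, one_mul]
      simpa using norm_le_pi_norm (valueV γ P r) i
  | succ L ih =>
      have hfix := congrFun (valueV_fix (γ := γ) (P := P) (r := r) hn hγ0 hγ1 hP) i
      simp only [Pi.add_apply, Pi.smul_apply, smul_eq_mul, Matrix.mulVec, dotProduct] at hfix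
      have hw : tdW γ P r (L + 1) i = r i + γ * ∑ j, P i j * tdW γ P r L j := by
        simp [tdW, Matrix.mulVec, dotProduct]
      have key : valueV γ P r i - tdW γ P r (L + 1) i
          = γ * ∑ j, P i j * (valueV γ P r j - tdW γ P r L j) := by
        rw [hw, hfix, add_sub_add_left_eq_sub, ← mul_sub, ← Finset.sum_sub_distrib]
        congr 1
        exact Finset.sum_congr rfl fun j _ => by ring
      rw [key, abs_mul, abs_of_nonneg hγ0]
      calc γ * |∑ j, P i j * (valueV γ P r j - tdW γ P r L j)|
          ≤ γ * ∑ j, P i j * (γ ^ L * ‖valueV γ P r‖) := by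
            refine mul_le_mul_of_nonneg_left ?_ hγ0
            refine (Finset.abs_sum_le_sum_abs _ _).trans (Finset.sum_le_sum fun j _ => ?_)
            rw [abs_mul, abs_of_nonneg (hP.1 i j)]
            exact mul_le_mul_of_nonneg_left (ih j) (hP.1 i j)
        _ = γ ^ (L + 1) * ‖valueV γ P r‖ := by
            rw [← Finset.sum_mul, hP.2 i, one_mul]; ring

end valuefacts

lemma tfTD_eq_tdW (γ : ℝ) (P : Matrix (Fin n) (Fin n) ℝ) (r : Fin n → ℝ) (ω : Fin n) (L : ℕ) :
    tfTD γ P r ω L = tdW γ P r L ω := by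
  rw [tfTD, tfOut_eq, bseq_zero_u, Sm_Atd, (brow_pow_td γ P r ω L).2, neg_neg]
-- ======== derivative machinery ========

lemma hasDerivAt_pow_entry {ι : Type*} [Fintype ι] [DecidableEq ι] (S T : Matrix ι ι ℝ)
    (L : ℕ) (p q : ι) :
    HasDerivAt (fun t : ℝ => ((S + t • T) ^ L) p q)
      ((∑ m ∈ Finset.range L, S ^ m * T * S ^ (L - 1 - m)) p q) 0 := by
  induction L generalizing p q with
  | zero =>
      simp only [pow_zero, Finset.range_zero, Finset.sum_empty, Matrix.zero_apply]
      exact hasDerivAt_const _ _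
  | succ L ih =>
      have hfun : (fun t : ℝ => ((S + t • T) ^ (L + 1)) p q)
          = fun t => ∑ c, ((S + t • T) ^ L) p c * (S + t • T) c q := by
        funext t; rw [pow_succ, Matrix.mul_apply]
      rw [hfun]
      have hterm : ∀ c : ι, HasDerivAt
          (fun t : ℝ => ((S + t • T) ^ L) p c * (S + t • T) c q)
          ((∑ m ∈ Finset.range L, S ^ m * T * S ^ (L - 1 - m)) p c * S c q
            + (S ^ L) p c * T c q) 0 := by
        intro c
        have h2 : HasDerivAt (fun t : ℝ => (S + t • T) c q) (T c q) 0 := by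
          have heq : (fun t : ℝ => (S + t • T) c q) = fun t => S c q + t * T c q := by
            funext t; simp [Matrix.add_apply, Matrix.smul_apply, smul_eq_mul]
          rw [heq]
          simpa using ((hasDerivAt_id (0 : ℝ)).mul_const (T c q)).const_add (S c q)
        have h := (ih p c).fun_mul h2
        simpa [zero_smul, add_zero] using h
      have hsum := HasDerivAt.fun_sum (u := (Finset.univ : Finset ι)) (fun c _ => hterm c)
      refine hsum.congr_deriv ?_
      have halg : (∑ m ∈ Finset.range (L + 1), S ^ m * T * S ^ (L + 1 - 1 - m))
          = (∑ m ∈ Finset.range L, S ^ m * T * S ^ (L - 1 - m)) * S + S ^ L * T := by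
        rw [Finset.sum_range_succ]
        congr 1
        · rw [Finset.sum_mul]
          refine Finset.sum_congr rfl fun m hm => ?_
          have hm' : L + 1 - 1 - m = (L - 1 - m) + 1 := by
            have := Finset.mem_range.mp hm; omega
          rw [hm', pow_succ, ← Matrix.mul_assoc]
        · simp
      rw [halg]
      simp [Matrix.add_apply, Matrix.mul_apply, Finset.sum_add_distrib]

lemma mul_vecMulVec {m k l : Type*} [Fintype k] (A : Matrix m k ℝ) (x : k → ℝ) (y : l → ℝ) :
    A * Matrix.vecMulVec x y = Matrix.vecMulVec (A.mulVec x) y := by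
  ext i j
  simp [Matrix.mul_apply, Matrix.vecMulVec_apply, Matrix.mulVec, dotProduct,
    Finset.sum_mul, mul_assoc]

lemma vecMulVec_mul {m k l : Type*} [Fintype k] (x : m → ℝ) (y : k → ℝ) (B : Matrix k l ℝ) :
    Matrix.vecMulVec x y * B = Matrix.vecMulVec x (Matrix.vecMul y B) := by
  ext i j
  simp [Matrix.mul_apply, Matrix.vecMulVec_apply, Matrix.vecMul, dotProduct,
    Finset.mul_sum, mul_assoc]

lemma Km_std (γ : ℝ) (P : Matrix (Fin n) (Fin n) ℝ) (ω : Fin n) (a b : TwoN n) :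
    Km γ P ω (Matrix.single a b 1) =
      Matrix.vecMulVec (fun i => Ymat γ P ω a i) (fun j => Ymat γ P ω b j) := by
  ext i j
  simp only [Km, Matrix.mul_apply, Matrix.transpose_apply, Matrix.vecMulVec_apply,
    Matrix.single, Matrix.of_apply]
  simp [ite_and, mul_ite, ite_mul, Finset.sum_ite_eq, Finset.sum_ite_eq']

/-- the scalar factors in the A-derivative -/
def phiF (γ : ℝ) (P : Matrix (Fin n) (Fin n) ℝ) (r : Fin n → ℝ) (ω : Fin n) (m : ℕ)
    (a : TwoN n) : ℝ :=
  ∑ i : CIdx n, (brow r * (Sexp γ P ω) ^ m * maskM n) () i * Ymat γ P ω a i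

def psiF (γ : ℝ) (P : Matrix (Fin n) (Fin n) ℝ) (ω : Fin n) (k : ℕ) (b : TwoN n) : ℝ :=
  ∑ j : CIdx n, Ymat γ P ω b j * ((Sexp γ P ω) ^ k) j (Sum.inr ())

lemma sandwich_term (γ : ℝ) (P : Matrix (Fin n) (Fin n) ℝ) (r : Fin n → ℝ) (ω : Fin n)
    (m k : ℕ) (a b : TwoN n) :
    (brow r * ((Sexp γ P ω) ^ m *
        (maskM n * Km γ P ω (Matrix.single a b 1)) * (Sexp γ P ω) ^ k)) ()
        (Sum.inr ())
      = phiF γ P r ω m a * psiF γ P ω k b := by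
  rw [Km_std, _root_.mul_vecMulVec, _root_.mul_vecMulVec, _root_.vecMulVec_mul, _root_.mul_vecMulVec]
  simp only [Matrix.vecMulVec_apply]
  rw [Matrix.mulVec_mulVec, Matrix.mulVec_mulVec, phiF, psiF, Matrix.mul_assoc]
  rfl
-- ======== closed forms for gvec ========
set_option maxHeartbeats 1000000

lemma gvec_inl_eq (γ : ℝ) (P : Matrix (Fin n) (Fin n) ℝ) (r : Fin n → ℝ) (ω : Fin n)
    (L : ℕ) (a b : TwoN n) :
    gvec γ P r L ω (Sum.inl (a, b)) =
      -(∑ m ∈ Finset.range L, phiF γ P r ω m a * psiF γ P ω (L - 1 - m) b) := by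
  set E := Matrix.single a b (1 : ℝ) with hE
  set Tm := maskM n * Km γ P ω E with hTm
  have h0 : (1 : Matrix (CIdx n) (CIdx n) ℝ) + maskM n * Km γ P ω (Atd n) = Sexp γ P ω :=
    Sm_Atd γ P ω
  have hSm : ∀ t : ℝ, Sm γ P ω (Atd n + t • E) = Sexp γ P ω + t • Tm := by
    intro t
    rw [Sm, Km, Matrix.mul_add, Matrix.mul_smul, Matrix.add_mul, Matrix.smul_mul,
      Matrix.mul_add, Matrix.mul_smul, ← add_assoc]
    exact congrArg (fun X => X + t • Tm) h0
  have hfun : (fun t : ℝ => tfOut γ P r ω (Atd n + t • E) 0 L)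
      = fun t => -((brow r * (Sexp γ P ω + t • Tm) ^ L) () (Sum.inr ())) := by
    funext t
    rw [tfOut_eq, bseq_zero_u, hSm t]
  have hentry : HasDerivAt
      (fun t : ℝ => (brow r * (Sexp γ P ω + t • Tm) ^ L) () (Sum.inr ()))
      ((brow r * ∑ m ∈ Finset.range L,
        (Sexp γ P ω) ^ m * Tm * (Sexp γ P ω) ^ (L - 1 - m)) () (Sum.inr ())) 0 := by
    have hf : (fun t : ℝ => (brow r * (Sexp γ P ω + t • Tm) ^ L) () (Sum.inr ()))
        = fun t => ∑ c, brow r () c * ((Sexp γ P ω + t • Tm) ^ L) c (Sum.inr ()) := by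
      funext t; rw [Matrix.mul_apply]
    rw [hf]
    have hs := HasDerivAt.fun_sum (u := (Finset.univ : Finset (CIdx n)))
      (fun c _ => (hasDerivAt_pow_entry (Sexp γ P ω) Tm L c (Sum.inr ())).const_mul
        (brow r () c))
    exact hs.congr_deriv Matrix.mul_apply.symm
  have hgv : gvec γ P r L ω (Sum.inl (a, b))
      = deriv (fun t : ℝ => tfOut γ P r ω (Atd n + t • E) 0 L) 0 := rfl
  rw [hgv, hfun, (hentry.fun_neg).deriv, Matrix.mul_sum, Matrix.sum_apply, neg_inj]
  refine Finset.sum_congr rfl fun m _ => ?_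
  exact sandwich_term γ P r ω m (L - 1 - m) a b

lemma gvec_inr_eq (γ : ℝ) (P : Matrix (Fin n) (Fin n) ℝ) (r : Fin n → ℝ) (ω : Fin n)
    (L : ℕ) (k : TwoN n) :
    gvec γ P r L ω (Sum.inr k) =
      -(∑ i, Ymat γ P ω k (Sum.inl i) * ((Sexp γ P ω) ^ L) (Sum.inl i) (Sum.inr ())) := by
  set E := Matrix.single () k (1 : ℝ) with hE
  set W := maskM n * Km γ P ω (Atd n) with hW
  set Y := Ymat γ P ω with hY
  set S := Sexp γ P ω with hS'
  have hS : S = 1 + W := (Sm_Atd γ P ω).symm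
  have hb : ∀ (t : ℝ) (l : ℕ), bseq γ P r ω (Atd n) (t • E) l
      = brow r * S ^ l + t • (E * Y * W * ∑ m ∈ Finset.range l, S ^ m) := by
    intro t l
    induction l with
    | zero => simp [bseq]
    | succ l ih =>
        rw [bseq, ih]
        have hpow : S ^ (l + 1) = S ^ l + S ^ l * W := by
          rw [pow_succ]
          nth_rewrite 2 [hS]
          rw [Matrix.mul_add, Matrix.mul_one]
        have e1 : brow r * S ^ l + brow r * S ^ l * W = brow r * S ^ (l + 1) := by
          rw [hpow, Matrix.mul_add, Matrix.mul_assoc (brow r) (S ^ l) W]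
        have hgeom : (∑ m ∈ Finset.range l, S ^ m) * S + 1
            = ∑ m ∈ Finset.range (l + 1), S ^ m := by
          rw [geom_sum_succ]
          congr 1
          rw [Finset.sum_mul, Finset.mul_sum]
          exact Finset.sum_congr rfl fun m _ => by rw [← pow_succ, pow_succ']
        have e2 : E * Y * W * (∑ m ∈ Finset.range l, S ^ m)
              + (E * Y * W + E * Y * W * (∑ m ∈ Finset.range l, S ^ m) * W)
            = E * Y * W * ∑ m ∈ Finset.range (l + 1), S ^ m := by
          have hgs : (∑ m ∈ Finset.range l, S ^ m) * S
              = (∑ m ∈ Finset.range l, S ^ m) + (∑ m ∈ Finset.range l, S ^ m) * W := by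
            nth_rewrite 2 [hS]
            rw [Matrix.mul_add, Matrix.mul_one]
          rw [← hgeom, Matrix.mul_add, Matrix.mul_one, hgs, Matrix.mul_add,
            Matrix.mul_assoc (E * Y * W) (∑ m ∈ Finset.range l, S ^ m) W]
          abel
        calc brow r * S ^ l + t • (E * Y * W * ∑ m ∈ Finset.range l, S ^ m)
              + (t • E * Y + (brow r * S ^ l + t • (E * Y * W * ∑ m ∈ Finset.range l, S ^ m))) * W
            = (brow r * S ^ l + brow r * S ^ l * W)
              + t • (E * Y * W * (∑ m ∈ Finset.range l, S ^ m)
                + (E * Y * W + E * Y * W * (∑ m ∈ Finset.range l, S ^ m) * W)) := by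
              rw [Matrix.add_mul, Matrix.add_mul, Matrix.smul_mul, Matrix.smul_mul,
                Matrix.smul_mul, smul_add, smul_add]
              rw [Matrix.mul_assoc (E * Y * W) _ W]
              abel
          _ = brow r * S ^ (l + 1) + t • (E * Y * W * ∑ m ∈ Finset.range (l + 1), S ^ m) := by
              rw [e1, e2]
  have hfun : (fun t : ℝ => tfOut γ P r ω (Atd n) (t • E) L)
      = fun t => -((brow r * S ^ L) () (Sum.inr ()))
          + t * -((E * Y * W * ∑ m ∈ Finset.range L, S ^ m) () (Sum.inr ())) := by
    funext t
    rw [tfOut_eq, hb t L]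
    simp only [Matrix.add_apply, Matrix.smul_apply, smul_eq_mul]
    ring
  have hgv : gvec γ P r L ω (Sum.inr k)
      = deriv (fun t : ℝ => tfOut γ P r ω (Atd n) (t • E) L) 0 := rfl
  have hd : HasDerivAt (fun t : ℝ => -((brow r * S ^ L) () (Sum.inr ()))
      + t * -((E * Y * W * ∑ m ∈ Finset.range L, S ^ m) () (Sum.inr ())))
      (-((E * Y * W * ∑ m ∈ Finset.range L, S ^ m) () (Sum.inr ()))) 0 := by
    simpa using ((hasDerivAt_id (0 : ℝ)).mul_const
      (-((E * Y * W * ∑ m ∈ Finset.range L, S ^ m) () (Sum.inr ())))).const_add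
      (-((brow r * S ^ L) () (Sum.inr ())))
  rw [hgv, hfun, hd.deriv, neg_inj]
  have hWS : W * ∑ m ∈ Finset.range L, S ^ m = S ^ L - 1 := by
    have : W = S - 1 := by rw [hS]; abel
    rw [this, mul_geom_sum]
  rw [Matrix.mul_assoc (E * Y) W, hWS, Matrix.mul_apply, Fintype.sum_sum_type]
  have hEY : ∀ j : CIdx n, (E * Y) () j = Y k j := by
    intro j
    rw [Matrix.mul_apply]
    simp [hE, Matrix.single]
  have hbot : (S ^ L - 1) (Sum.inr ()) (Sum.inr ()) = 0 := by
    simp [Matrix.sub_apply, (Sexp_pow_bot (γ := γ) (P := P) (ω := ω) L).2, Matrix.one_apply, hS']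
  rw [show ∑ u : Unit, (E * Y) () (Sum.inr u) * (S ^ L - 1) (Sum.inr u) (Sum.inr ())
      = 0 from by simp [hbot]]
  rw [add_zero]
  refine Finset.sum_congr rfl fun i _ => ?_
  rw [hEY]
  congr 1
  simp [Matrix.sub_apply, Matrix.one_apply]
-- ======== ℓ1 bounds ========

lemma sum_id_succ (L : ℕ) : ∑ j ∈ Finset.range L, ((j : ℝ) + 1) = ((L : ℝ) ^ 2 + L) / 2 := by
  induction L with
  | zero => simp
  | succ L ih =>
      rw [Finset.sum_range_succ, ih]
      push_cast
      ring

lemma sum_reflect_eq (L : ℕ) :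
    ∑ m ∈ Finset.range L, (((L - 1 - m : ℕ) : ℝ) + 1) = ((L : ℝ) ^ 2 + L) / 2 := by
  rw [Finset.sum_range_reflect (fun j => ((j : ℕ) : ℝ) + 1) L]
  exact sum_id_succ L

section l1bounds
variable (hn : 1 ≤ n) (hγ0 : 0 ≤ γ) (hγ1 : γ < 1) (hP : RowStochastic P)
include hn hγ0 hγ1 hP

lemma phiF_sum_bound (m : ℕ) :
    ∑ a : TwoN n, |phiF γ P r ω m a|
      ≤ (1 + γ) * ((n : ℝ) * ((1 + γ) * ‖valueV γ P r‖)) := by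
  set C := (1 + γ) * ‖valueV γ P r‖ with hC
  have hCr : ∀ i, |r i| ≤ C := r_bound hn hγ0 hγ1 hP
  have hu : ∀ i : CIdx n, |(brow r * (Sexp γ P ω) ^ m * maskM n) () i|
      ≤ Sum.elim (fun _ : Fin n => C) (fun _ => 0) i := by
    rintro (i | u)
    · rw [mul_maskM_inl]
      exact brow_pow_bound hP hγ0 (le_of_lt hγ1) hCr m i
    · rw [mul_maskM_inr]; simp
  calc ∑ a : TwoN n, |phiF γ P r ω m a|
      ≤ ∑ a : TwoN n, ∑ i : CIdx n,
          |(brow r * (Sexp γ P ω) ^ m * maskM n) () i| * |Ymat γ P ω a i| := by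
        refine Finset.sum_le_sum fun a _ => ?_
        refine (Finset.abs_sum_le_sum_abs _ _).trans (le_of_eq ?_)
        exact Finset.sum_congr rfl fun i _ => abs_mul _ _
    _ = ∑ i : CIdx n, |(brow r * (Sexp γ P ω) ^ m * maskM n) () i| * ∑ a, |Ymat γ P ω a i| := by
        rw [Finset.sum_comm]
        exact Finset.sum_congr rfl fun i _ => (Finset.mul_sum _ _ _).symm
    _ ≤ ∑ i : CIdx n, |(brow r * (Sexp γ P ω) ^ m * maskM n) () i| * (1 + γ) := by
        refine Finset.sum_le_sum fun i _ => ?_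
        exact mul_le_mul_of_nonneg_left (Ymat_colsum hP hγ0 i) (abs_nonneg _)
    _ ≤ ∑ i : CIdx n, Sum.elim (fun _ : Fin n => C) (fun _ => 0) i * (1 + γ) := by
        refine Finset.sum_le_sum fun i _ => ?_
        exact mul_le_mul_of_nonneg_right (hu i) (by linarith)
    _ = (1 + γ) * ((n : ℝ) * C) := by
        rw [Fintype.sum_sum_type]
        simp only [Sum.elim_inl, Sum.elim_inr, zero_mul, Finset.sum_const,
          Finset.card_univ, Fintype.card_fin, nsmul_eq_mul, Finset.sum_const_zero, add_zero]
        ring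

lemma psiF_sum_bound (k : ℕ) :
    ∑ b : TwoN n, |psiF γ P ω k b| ≤ (1 + γ) * ((k : ℝ) + 1) := by
  have hq : ∑ j : CIdx n, |((Sexp γ P ω) ^ k) j (Sum.inr ())| ≤ (k : ℝ) + 1 := by
    rw [Fintype.sum_sum_type]
    have h1 := Sexp_pow_ctx_qcol (ω := ω) hP hγ0 (le_of_lt hγ1) k
    have h2 : ∑ u : Unit, |((Sexp γ P ω) ^ k) (Sum.inr u) (Sum.inr ())| = 1 := by
      simp [(Sexp_pow_bot (γ := γ) (P := P) (ω := ω) k).2]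
    rw [h2]
    linarith
  calc ∑ b : TwoN n, |psiF γ P ω k b|
      ≤ ∑ b : TwoN n, ∑ j : CIdx n, |Ymat γ P ω b j| * |((Sexp γ P ω) ^ k) j (Sum.inr ())| := by
        refine Finset.sum_le_sum fun b _ => ?_
        refine (Finset.abs_sum_le_sum_abs _ _).trans (le_of_eq ?_)
        exact Finset.sum_congr rfl fun j _ => abs_mul _ _
    _ = ∑ j : CIdx n, (∑ b, |Ymat γ P ω b j|) * |((Sexp γ P ω) ^ k) j (Sum.inr ())| := by
        rw [Finset.sum_comm]
        exact Finset.sum_congr rfl fun j _ => (Finset.sum_mul _ _ _).symm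
    _ ≤ ∑ j : CIdx n, (1 + γ) * |((Sexp γ P ω) ^ k) j (Sum.inr ())| := by
        refine Finset.sum_le_sum fun j _ => ?_
        exact mul_le_mul_of_nonneg_right (Ymat_colsum hP hγ0 j) (abs_nonneg _)
    _ = (1 + γ) * ∑ j : CIdx n, |((Sexp γ P ω) ^ k) j (Sum.inr ())| := by
        rw [Finset.mul_sum]
    _ ≤ (1 + γ) * ((k : ℝ) + 1) := by
        exact mul_le_mul_of_nonneg_left hq (by linarith)

lemma gvec_inl_sum_bound (L : ℕ) :
    ∑ ab : TwoN n × TwoN n, |gvec γ P r L ω (Sum.inl ab)|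
      ≤ (1 + γ) * ((n : ℝ) * ((1 + γ) * ‖valueV γ P r‖)) * (1 + γ) *
          (((L : ℝ) ^ 2 + L) / 2) := by
  set C1 := (1 + γ) * ((n : ℝ) * ((1 + γ) * ‖valueV γ P r‖)) with hC1
  have hC10 : 0 ≤ C1 := by
    have : (0 : ℝ) ≤ ‖valueV γ P r‖ := norm_nonneg _
    have hn' : (0 : ℝ) ≤ (n : ℝ) := Nat.cast_nonneg n
    positivity
  calc ∑ ab : TwoN n × TwoN n, |gvec γ P r L ω (Sum.inl ab)|
      = ∑ a : TwoN n, ∑ b : TwoN n,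
          |∑ m ∈ Finset.range L, phiF γ P r ω m a * psiF γ P ω (L - 1 - m) b| := by
        rw [Fintype.sum_prod_type]
        exact Finset.sum_congr rfl fun a _ => Finset.sum_congr rfl fun b _ => by
          rw [gvec_inl_eq, abs_neg]
    _ ≤ ∑ a : TwoN n, ∑ b : TwoN n, ∑ m ∈ Finset.range L,
          |phiF γ P r ω m a| * |psiF γ P ω (L - 1 - m) b| := by
        refine Finset.sum_le_sum fun a _ => Finset.sum_le_sum fun b _ => ?_
        refine (Finset.abs_sum_le_sum_abs _ _).trans (le_of_eq ?_)
        exact Finset.sum_congr rfl fun m _ => abs_mul _ _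
    _ = ∑ a : TwoN n, ∑ m ∈ Finset.range L, ∑ b : TwoN n,
          |phiF γ P r ω m a| * |psiF γ P ω (L - 1 - m) b| :=
        Finset.sum_congr rfl fun a _ => Finset.sum_comm
    _ = ∑ m ∈ Finset.range L, ∑ a : TwoN n, ∑ b : TwoN n,
          |phiF γ P r ω m a| * |psiF γ P ω (L - 1 - m) b| := Finset.sum_comm
    _ = ∑ m ∈ Finset.range L,
          (∑ a : TwoN n, |phiF γ P r ω m a|) * ∑ b : TwoN n, |psiF γ P ω (L - 1 - m) b| := by
        refine Finset.sum_congr rfl fun m _ => ?_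
        rw [Finset.sum_mul_sum]
    _ ≤ ∑ m ∈ Finset.range L, C1 * ((1 + γ) * (((L - 1 - m : ℕ) : ℝ) + 1)) := by
        refine Finset.sum_le_sum fun m _ => ?_
        refine mul_le_mul (phiF_sum_bound hn hγ0 hγ1 hP m)
          (psiF_sum_bound hn hγ0 hγ1 hP (L - 1 - m)) ?_ hC10
        exact Finset.sum_nonneg fun b _ => abs_nonneg _
    _ = C1 * (1 + γ) * ∑ m ∈ Finset.range L, (((L - 1 - m : ℕ) : ℝ) + 1) := by
        rw [Finset.mul_sum]
        exact Finset.sum_congr rfl fun m _ => by ring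
    _ = C1 * (1 + γ) * (((L : ℝ) ^ 2 + L) / 2) := by rw [sum_reflect_eq]

lemma gvec_inr_sum_bound (L : ℕ) :
    ∑ k : TwoN n, |gvec γ P r L ω (Sum.inr k)| ≤ (1 + γ) * (L : ℝ) := by
  calc ∑ k : TwoN n, |gvec γ P r L ω (Sum.inr k)|
      ≤ ∑ k : TwoN n, ∑ i : Fin n,
          |Ymat γ P ω k (Sum.inl i)| * |((Sexp γ P ω) ^ L) (Sum.inl i) (Sum.inr ())| := by
        refine Finset.sum_le_sum fun k _ => ?_
        rw [gvec_inr_eq, abs_neg]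
        refine (Finset.abs_sum_le_sum_abs _ _).trans (le_of_eq ?_)
        exact Finset.sum_congr rfl fun i _ => abs_mul _ _
    _ = ∑ i : Fin n, (∑ k, |Ymat γ P ω k (Sum.inl i)|) *
          |((Sexp γ P ω) ^ L) (Sum.inl i) (Sum.inr ())| := by
        rw [Finset.sum_comm]
        exact Finset.sum_congr rfl fun i _ => (Finset.sum_mul _ _ _).symm
    _ ≤ ∑ i : Fin n, (1 + γ) * |((Sexp γ P ω) ^ L) (Sum.inl i) (Sum.inr ())| := by
        refine Finset.sum_le_sum fun i _ => ?_
        exact mul_le_mul_of_nonneg_right (Ymat_colsum hP hγ0 (Sum.inl i)) (abs_nonneg _)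
    _ = (1 + γ) * ∑ i : Fin n, |((Sexp γ P ω) ^ L) (Sum.inl i) (Sum.inr ())| := by
        rw [Finset.mul_sum]
    _ ≤ (1 + γ) * (L : ℝ) :=
        mul_le_mul_of_nonneg_left (Sexp_pow_ctx_qcol hP hγ0 (le_of_lt hγ1) L) (by linarith)

lemma gvec_total_bound (L : ℕ) :
    ∑ idx : (TwoN n × TwoN n) ⊕ TwoN n, |gvec γ P r L ω idx|
      ≤ (((L : ℝ) ^ 2 + L) / 2) *
            (2 * (n : ℝ) * ((n : ℝ) * (1 + γ) ^ 2 * ‖valueV γ P r‖ + (1 + γ) ^ 2))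
          + (L : ℝ) * (2 * (n : ℝ) * (1 + γ)) := by
  rw [Fintype.sum_sum_type]
  have h1 := gvec_inl_sum_bound (r := r) (ω := ω) hn hγ0 hγ1 hP L
  have h2 := gvec_inr_sum_bound (r := r) (ω := ω) hn hγ0 hγ1 hP L
  have hv0 : (0 : ℝ) ≤ ‖valueV γ P r‖ := norm_nonneg _
  have hn1 : (1 : ℝ) ≤ (n : ℝ) := by exact_mod_cast hn
  have hL0 : (0 : ℝ) ≤ (L : ℝ) := Nat.cast_nonneg L
  have hq0 : (0 : ℝ) ≤ ((L : ℝ) ^ 2 + L) / 2 := by positivity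
  have key1 : (1 + γ) * ((n : ℝ) * ((1 + γ) * ‖valueV γ P r‖)) * (1 + γ)
      ≤ 2 * (n : ℝ) * ((n : ℝ) * (1 + γ) ^ 2 * ‖valueV γ P r‖ + (1 + γ) ^ 2) := by
    have h2n : (1 + γ) ≤ 2 * (n : ℝ) := by linarith
    nlinarith [mul_nonneg (mul_nonneg (mul_nonneg (Nat.cast_nonneg n : (0:ℝ) ≤ (n:ℝ))
        (sq_nonneg (1 + γ))) hv0) (by linarith : (0:ℝ) ≤ 2 * (n:ℝ) - (1 + γ)),
      mul_nonneg (Nat.cast_nonneg n : (0:ℝ) ≤ (n:ℝ)) (sq_nonneg (1 + γ))]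
  have key2 : (1 + γ) ≤ 2 * (n : ℝ) * (1 + γ) := by nlinarith
  calc ∑ ab : TwoN n × TwoN n, |gvec γ P r L ω (Sum.inl ab)|
        + ∑ k : TwoN n, |gvec γ P r L ω (Sum.inr k)|
      ≤ (1 + γ) * ((n : ℝ) * ((1 + γ) * ‖valueV γ P r‖)) * (1 + γ) *
            (((L : ℝ) ^ 2 + L) / 2) + (1 + γ) * (L : ℝ) := add_le_add h1 h2
    _ ≤ (((L : ℝ) ^ 2 + L) / 2) *
            (2 * (n : ℝ) * ((n : ℝ) * (1 + γ) ^ 2 * ‖valueV γ P r‖ + (1 + γ) ^ 2))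
          + (L : ℝ) * (2 * (n : ℝ) * (1 + γ)) := by
        refine add_le_add ?_ ?_
        · rw [mul_comm (((L : ℝ) ^ 2 + L) / 2)]
          exact mul_le_mul_of_nonneg_right key1 hq0
        · rw [mul_comm (L : ℝ)]
          exact mul_le_mul_of_nonneg_right key2 hL0

end l1bounds

/-- quantitative bound on the expected Monte Carlo semi-gradient of the
looped L-layer transformer at the TD parameters. -/
theorem stmt18 (n : ℕ) (hn : 1 ≤ n) (γ : ℝ) (hγ0 : 0 ≤ γ) (hγ1 : γ < 1)
    (P : Matrix (Fin n) (Fin n) ℝ) (hP : RowStochastic P) (r : Fin n → ℝ)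
    (L : ℕ) (ρ : Fin n → ℝ) (hρ0 : ∀ ω, 0 ≤ ρ ω) (hρ1 : ∑ ω, ρ ω = 1) :
    ∑ idx : (TwoN n × TwoN n) ⊕ TwoN n,
        |∑ ω, (ρ ω * (valueV γ P r ω - tfTD γ P r ω L)) * gvec γ P r L ω idx|
      ≤ ‖valueV γ P r‖ * γ ^ L *
          ((((L : ℝ) ^ 2 + L) / 2) *
              (2 * (n : ℝ) * ((n : ℝ) * (1 + γ) ^ 2 * ‖valueV γ P r‖ + (1 + γ) ^ 2))
            + (L : ℝ) * (2 * (n : ℝ) * (1 + γ))) := by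
  set B : ℝ := (((L : ℝ) ^ 2 + L) / 2) *
      (2 * (n : ℝ) * ((n : ℝ) * (1 + γ) ^ 2 * ‖valueV γ P r‖ + (1 + γ) ^ 2))
    + (L : ℝ) * (2 * (n : ℝ) * (1 + γ)) with hB
  have hv0 : (0 : ℝ) ≤ ‖valueV γ P r‖ := norm_nonneg _
  have hB0 : 0 ≤ B := by
    rw [hB]
    have hL0 : (0 : ℝ) ≤ (L : ℝ) := Nat.cast_nonneg L
    have hn0 : (0 : ℝ) ≤ (n : ℝ) := Nat.cast_nonneg n
    positivity
  have hg : ∀ ω' : Fin n, ∑ idx : (TwoN n × TwoN n) ⊕ TwoN n, |gvec γ P r L ω' idx| ≤ B :=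
    fun ω' => gvec_total_bound (ω := ω') hn hγ0 hγ1 hP L
  have hc : ∀ ω' : Fin n, |valueV γ P r ω' - tfTD γ P r ω' L| ≤ γ ^ L * ‖valueV γ P r‖ := by
    intro ω'
    rw [tfTD_eq_tdW]
    exact td_value_bound hn hγ0 hγ1 hP L ω'
  calc ∑ idx : (TwoN n × TwoN n) ⊕ TwoN n,
        |∑ ω, (ρ ω * (valueV γ P r ω - tfTD γ P r ω L)) * gvec γ P r L ω idx|
      ≤ ∑ idx : (TwoN n × TwoN n) ⊕ TwoN n,
          ∑ ω, |(ρ ω * (valueV γ P r ω - tfTD γ P r ω L)) * gvec γ P r L ω idx| :=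
        Finset.sum_le_sum fun idx _ => Finset.abs_sum_le_sum_abs _ _
    _ = ∑ ω, ∑ idx : (TwoN n × TwoN n) ⊕ TwoN n,
          |(ρ ω * (valueV γ P r ω - tfTD γ P r ω L)) * gvec γ P r L ω idx| :=
        Finset.sum_comm
    _ ≤ ∑ ω, ρ ω * (γ ^ L * ‖valueV γ P r‖) * B := by
        refine Finset.sum_le_sum fun ω' _ => ?_
        have heq : ∑ idx : (TwoN n × TwoN n) ⊕ TwoN n,
            |(ρ ω' * (valueV γ P r ω' - tfTD γ P r ω' L)) * gvec γ P r L ω' idx|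
            = (ρ ω' * |valueV γ P r ω' - tfTD γ P r ω' L|) *
              ∑ idx : (TwoN n × TwoN n) ⊕ TwoN n, |gvec γ P r L ω' idx| := by
          rw [Finset.mul_sum]
          refine Finset.sum_congr rfl fun idx _ => ?_
          rw [abs_mul, abs_mul, abs_of_nonneg (hρ0 ω'), mul_assoc]
        rw [heq]
        have h1 : ρ ω' * |valueV γ P r ω' - tfTD γ P r ω' L|
            ≤ ρ ω' * (γ ^ L * ‖valueV γ P r‖) :=
          mul_le_mul_of_nonneg_left (hc ω') (hρ0 ω')
        refine mul_le_mul h1 (hg ω') (Finset.sum_nonneg fun _ _ => abs_nonneg _) ?_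
        exact mul_nonneg (hρ0 ω') (by positivity)
    _ = (∑ ω, ρ ω) * ((γ ^ L * ‖valueV γ P r‖) * B) := by
        rw [Finset.sum_mul]
        exact Finset.sum_congr rfl fun ω' _ => by ring
    _ = ‖valueV γ P r‖ * γ ^ L * B := by rw [hρ1]; ring


end
end

section
/- (Corollary 1) lim_{L→∞} J'(θ_L^TD) = 0, where J'(θ_L^TD) = ‖Δ_L^MC‖_1 is the ℓ1 norm of the expected multi-task Monte Carlo update Δ_L^MC = E_{(P,r)∼μ}[ Σ_{ω=1}^n ρ_P(ω) ( v_ω − F_L^{(ω)}(A^TD, 0) ) g_L(ω) ] of the looped Transformer evaluated at the TD parameters, with v_ω (the ω-th entry of the value vector v = (I_n − γP)^{-1} r) equal to the expected Monte Carlo return from state ω; i.e., the TD parameters are a global minimizer of the Monte Carlo norm-of-expected-update pretraining loss in the limit of infinitely many layers. -/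
open Matrix Filter Topology

noncomputable section

/-- The product σ-algebra on matrices, via the identification with the Pi type. -/
instance matrixMeasurableSpace {m k α : Type*} [MeasurableSpace α] :
    MeasurableSpace (Matrix m k α) :=
  inferInstanceAs (MeasurableSpace (m → k → α))

namespace Stmt19

variable {n : ℕ}

/-- Top `2n` rows of the prompt: constant along layers at TD-type parameters. -/
def topZ (γ : ℝ) (P : Matrix (Fin n) (Fin n) ℝ) (j : Fin n) : TwoN n → CIdx n → ℝ :=
  fun p q => match p, q with
  | Sum.inl k, Sum.inl i => if k = i then 1 else 0
  | Sum.inr k, Sum.inl i => γ * P i k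
  | Sum.inl k, Sum.inr _ => if k = j then 1 else 0
  | Sum.inr _, Sum.inr _ => 0

/-- The quadratic form `S(A) = Z_topᵀ A Z_top`. -/
def Sm (γ : ℝ) (P : Matrix (Fin n) (Fin n) ℝ) (j : Fin n)
    (A : Matrix (TwoN n) (TwoN n) ℝ) (c c' : CIdx n) : ℝ :=
  ∑ b, (∑ a, topZ γ P j a c * A a b) * topZ γ P j b c'

/-- Bottom-row recursion of the looped transformer. -/
def bot (γ : ℝ) (P : Matrix (Fin n) (Fin n) ℝ) (r : Fin n → ℝ) (j : Fin n)
    (A : Matrix (TwoN n) (TwoN n) ℝ) (u : Matrix Unit (TwoN n) ℝ) : ℕ → CIdx n → ℝ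
  | 0 => Sum.elim r (fun _ => 0)
  | l + 1 => fun c' => bot γ P r j A u l c' + ∑ i,
      ((∑ a, u () a * topZ γ P j a (Sum.inl i)) + bot γ P r j A u l (Sum.inl i))
        * Sm γ P j A (Sum.inl i) c'

section helpers
variable (u : Matrix Unit (TwoN n) ℝ) (A : Matrix (TwoN n) (TwoN n) ℝ)
  (Z : Matrix (RIdx n) (CIdx n) ℝ)

lemma quad_apply (c q : CIdx n) :
    (Zᵀ * Qmat n A * Z) c q
      = ∑ b, (∑ a, Z (Sum.inl a) c * A a b) * Z (Sum.inl b) q := by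
  simp [Matrix.mul_apply, Qmat, Fintype.sum_sum_type, Finset.sum_mul]

lemma pmz_top (tw : TwoN n) (c : CIdx n) : (Pmat n u * Z) (Sum.inl tw) c = 0 := by
  simp [Matrix.mul_apply, Pmat, Fintype.sum_sum_type]

lemma pmz_bot (c : CIdx n) :
    (Pmat n u * Z) (Sum.inr ()) c = (∑ a, u () a * Z (Sum.inl a) c) + Z (Sum.inr ()) c := by
  simp [Matrix.mul_apply, Pmat, Fintype.sum_sum_type, Matrix.one_apply]

lemma mask_apply (W : Matrix (RIdx n) (CIdx n) ℝ) (p : RIdx n) (q : CIdx n) :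
    (W * maskM n) p q = Sum.elim (fun i => W p (Sum.inl i)) (fun _ => (0:ℝ)) q := by
  cases q <;>
    simp [Matrix.mul_apply, maskM, Fintype.sum_sum_type, Matrix.one_apply, mul_ite,
      Finset.sum_ite_eq']

lemma attn_top (tw : TwoN n) (q : CIdx n) :
    attnLayer n (Pmat n u) (Qmat n A) Z (Sum.inl tw) q = Z (Sum.inl tw) q := by
  have h : ∀ c, (Pmat n u * Z * maskM n) (Sum.inl tw) c = 0 := by
    intro c; rw [mask_apply]; cases c <;> simp [pmz_top]
  simp [attnLayer, Matrix.add_apply, Matrix.mul_apply, h]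

lemma attn_bot (q : CIdx n) :
    attnLayer n (Pmat n u) (Qmat n A) Z (Sum.inr ()) q
      = Z (Sum.inr ()) q + ∑ i, ((∑ a, u () a * Z (Sum.inl a) (Sum.inl i))
          + Z (Sum.inr ()) (Sum.inl i))
        * (∑ b, (∑ a, Z (Sum.inl a) (Sum.inl i) * A a b) * Z (Sum.inl b) q) := by
  have h : ∀ c, (Pmat n u * Z * maskM n) (Sum.inr ()) c
      = Sum.elim (fun i => (∑ a, u () a * Z (Sum.inl a) (Sum.inl i))
          + Z (Sum.inr ()) (Sum.inl i)) (fun _ => (0:ℝ)) c := by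
    intro c; rw [mask_apply]; cases c <;> simp [pmz_bot]
  show Z (Sum.inr ()) q + ((Pmat n u * Z * maskM n) * (Zᵀ * Qmat n A * Z)) (Sum.inr ()) q = _
  congr 1
  rw [Matrix.mul_apply]
  rw [Fintype.sum_sum_type]
  simp only [h, Sum.elim_inl, Sum.elim_inr, zero_mul, Finset.sum_const_zero, add_zero]
  exact Finset.sum_congr rfl fun i _ => by rw [quad_apply]

end helpers

theorem embed_eq (γ : ℝ) (P : Matrix (Fin n) (Fin n) ℝ) (r : Fin n → ℝ) (j : Fin n)
    (A : Matrix (TwoN n) (TwoN n) ℝ) (u : Matrix Unit (TwoN n) ℝ) (l : ℕ) :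
    embed γ P r j A u l
      = fun p q => Sum.elim (fun tw => topZ γ P j tw q) (fun _ => bot γ P r j A u l q) p := by
  induction l with
  | zero =>
    funext p q
    cases p with
    | inl tw => cases tw <;> cases q <;> rfl
    | inr z => cases z; cases q <;> rfl
  | succ l ih =>
    funext p q
    show attnLayer n (Pmat n u) (Qmat n A) (embed γ P r j A u l) p q = _
    cases p with
    | inl tw => rw [attn_top, ih]; simp
    | inr z =>
      cases z
      rw [attn_bot, ih]
      simp only [Sum.elim_inl, Sum.elim_inr]
      rfl

lemma tfOut_eq (γ : ℝ) (P : Matrix (Fin n) (Fin n) ℝ) (r : Fin n → ℝ) (j : Fin n)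
    (A : Matrix (TwoN n) (TwoN n) ℝ) (u : Matrix Unit (TwoN n) ℝ) (L : ℕ) :
    tfOut γ P r j A u L = -(bot γ P r j A u L (Sum.inr ())) := by
  rw [tfOut, embed_eq]; simp

end Stmt19
namespace Stmt19

variable {n : ℕ} {γ R : ℝ} {P : Matrix (Fin n) (Fin n) ℝ} {r : Fin n → ℝ} {j : Fin n}

lemma Sm_Atd_ctx (γ : ℝ) (P : Matrix (Fin n) (Fin n) ℝ) (j : Fin n) (i i' : Fin n) :
    Sm γ P j (Atd n) (Sum.inl i) (Sum.inl i')
      = (if i = i' then -1 else 0) + γ * P i' i := by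
  simp [Sm, topZ, Atd, Fintype.sum_sum_type, Matrix.fromBlocks_apply₁₁,
    Matrix.fromBlocks_apply₁₂, Matrix.fromBlocks_apply₂₁, Matrix.fromBlocks_apply₂₂,
    Matrix.one_apply, Matrix.neg_apply, mul_ite, ite_mul, Finset.sum_ite_eq,
    Finset.sum_ite_eq', eq_comm]
  split <;> norm_num

lemma Sm_Atd_q (γ : ℝ) (P : Matrix (Fin n) (Fin n) ℝ) (j : Fin n) (i : Fin n) :
    Sm γ P j (Atd n) (Sum.inl i) (Sum.inr ()) = -(if i = j then 1 else 0) := by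
  simp [Sm, topZ, Atd, Fintype.sum_sum_type, Matrix.fromBlocks_apply₁₁,
    Matrix.fromBlocks_apply₁₂, Matrix.fromBlocks_apply₂₁, Matrix.fromBlocks_apply₂₂,
    Matrix.one_apply, Matrix.neg_apply, mul_ite, ite_mul, Finset.sum_ite_eq,
    Finset.sum_ite_eq', eq_comm]

lemma bot_td_ctx_succ (l : ℕ) (i' : Fin n) :
    bot γ P r j (Atd n) 0 (l+1) (Sum.inl i')
      = γ * ∑ i, P i' i * bot γ P r j (Atd n) 0 l (Sum.inl i) := by
  have e : ∀ i : Fin n,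
      ((∑ a, (0 : Matrix Unit (TwoN n) ℝ) () a * topZ γ P j a (Sum.inl i))
          + bot γ P r j (Atd n) 0 l (Sum.inl i)) * Sm γ P j (Atd n) (Sum.inl i) (Sum.inl i')
        = (if i = i' then -bot γ P r j (Atd n) 0 l (Sum.inl i) else 0)
          + γ * (P i' i * bot γ P r j (Atd n) 0 l (Sum.inl i)) := by
    intro i; rw [Sm_Atd_ctx]; simp only [Matrix.zero_apply, zero_mul,
      Finset.sum_const_zero, zero_add]; split <;> ring
  show bot γ P r j (Atd n) 0 l (Sum.inl i') + ∑ i, _ = _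
  rw [Finset.sum_congr rfl fun i _ => e i, Finset.sum_add_distrib,
    Finset.sum_ite_eq' Finset.univ i', ← Finset.mul_sum]
  simp

lemma bot_td_q_succ (l : ℕ) :
    bot γ P r j (Atd n) 0 (l+1) (Sum.inr ())
      = bot γ P r j (Atd n) 0 l (Sum.inr ()) - bot γ P r j (Atd n) 0 l (Sum.inl j) := by
  have e : ∀ i : Fin n,
      ((∑ a, (0 : Matrix Unit (TwoN n) ℝ) () a * topZ γ P j a (Sum.inl i))
          + bot γ P r j (Atd n) 0 l (Sum.inl i)) * Sm γ P j (Atd n) (Sum.inl i) (Sum.inr ())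
        = (if i = j then -bot γ P r j (Atd n) 0 l (Sum.inl i) else 0) := by
    intro i; rw [Sm_Atd_q]; simp only [Matrix.zero_apply, zero_mul,
      Finset.sum_const_zero, zero_add]; split <;> ring
  show bot γ P r j (Atd n) 0 l (Sum.inr ()) + ∑ i, _ = _
  rw [Finset.sum_congr rfl fun i _ => e i, Finset.sum_ite_eq' Finset.univ j]
  simp; ring

lemma bot_td_ctx_eq : ∀ (l : ℕ) (i : Fin n),
    bot γ P r j (Atd n) 0 l (Sum.inl i) = tdW γ P r (l+1) i - tdW γ P r l i := by
  intro l
  induction l with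
  | zero => intro i; simp [bot, tdW]
  | succ l ih =>
    intro i
    rw [bot_td_ctx_succ]
    have : ∀ k, bot γ P r j (Atd n) 0 l (Sum.inl k) = tdW γ P r (l+1) k - tdW γ P r l k := ih
    simp only [this]
    simp only [tdW, Pi.add_apply, Pi.smul_apply, Matrix.mulVec, dotProduct, smul_eq_mul,
      mul_sub, Finset.sum_sub_distrib, Finset.mul_sum]
    ring

lemma bot_td_q_eq : ∀ (l : ℕ),
    bot γ P r j (Atd n) 0 l (Sum.inr ()) = -tdW γ P r l j := by
  intro l
  induction l with
  | zero => simp [bot, tdW]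
  | succ l ih =>
    rw [bot_td_q_succ, ih, bot_td_ctx_eq]
    ring

lemma tfTD_eq (γ : ℝ) (P : Matrix (Fin n) (Fin n) ℝ) (r : Fin n → ℝ) (j : Fin n) (L : ℕ) :
    tfTD γ P r j L = tdW γ P r L j := by
  rw [tfTD, tfOut_eq, bot_td_q_eq]; ring

lemma bot_td_ctx_bound (hP : RowStochastic P) (hγ0 : 0 ≤ γ) (hγ1 : γ ≤ 1)
    (hr : ∀ i, |r i| ≤ R) (hR0 : 0 ≤ R) :
    ∀ (l : ℕ) (i : Fin n), |bot γ P r j (Atd n) 0 l (Sum.inl i)| ≤ R := by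
  intro l
  induction l with
  | zero => intro i; simpa [bot] using hr i
  | succ l ih =>
    intro i'
    rw [bot_td_ctx_succ, abs_mul, abs_of_nonneg hγ0]
    have h1 : |∑ i, P i' i * bot γ P r j (Atd n) 0 l (Sum.inl i)| ≤ R := by
      calc |∑ i, P i' i * bot γ P r j (Atd n) 0 l (Sum.inl i)|
          ≤ ∑ i, |P i' i * bot γ P r j (Atd n) 0 l (Sum.inl i)| :=
            Finset.abs_sum_le_sum_abs _ _
        _ ≤ ∑ i, P i' i * R := by
            refine Finset.sum_le_sum fun i _ => ?_
            rw [abs_mul, abs_of_nonneg (hP.1 i' i)]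
            exact mul_le_mul_of_nonneg_left (ih i) (hP.1 i' i)
        _ = R := by rw [← Finset.sum_mul, hP.2 i', one_mul]
    calc γ * |∑ i, P i' i * bot γ P r j (Atd n) 0 l (Sum.inl i)| ≤ γ * R :=
          mul_le_mul_of_nonneg_left h1 hγ0
      _ ≤ 1 * R := mul_le_mul_of_nonneg_right hγ1 hR0
      _ = R := one_mul R

end Stmt19
namespace Stmt19

variable {n : ℕ} {γ R : ℝ} {P : Matrix (Fin n) (Fin n) ℝ} {r : Fin n → ℝ}

lemma isUnit_one_sub (hP : RowStochastic P) (hγ0 : 0 ≤ γ) (hγ1 : γ < 1) :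
    IsUnit ((1 : Matrix (Fin n) (Fin n) ℝ) - γ • P) := by
  rw [← Matrix.mulVec_injective_iff_isUnit]
  intro x y hxy
  have hd : ∀ d : Fin n → ℝ, ((1 : Matrix (Fin n) (Fin n) ℝ) - γ • P).mulVec d = 0 → d = 0 := by
    intro d hd0
    by_contra hne
    rw [Matrix.sub_mulVec, Matrix.one_mulVec, Matrix.smul_mulVec] at hd0
    have hptwise : ∀ i, d i = γ * ∑ k, P i k * d k := by
      intro i
      have h := congrFun hd0 i
      simp only [Pi.sub_apply, Pi.smul_apply, Pi.zero_apply, smul_eq_mul,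
        Matrix.mulVec, dotProduct] at h
      linarith [h]
    have hne' : Nonempty (Fin n) := by
      by_contra h
      exact hne (funext fun i => absurd ⟨i⟩ h)
    haveI := hne'
    set M := Finset.univ.sup' Finset.univ_nonempty (fun i => |d i|) with hM
    have hle : ∀ i, |d i| ≤ M := fun i => Finset.le_sup' (fun i => |d i|) (Finset.mem_univ i)
    obtain ⟨i0⟩ := hne'
    have hM0 : 0 ≤ M := le_trans (abs_nonneg (d i0)) (hle i0)
    have hMγ : M ≤ γ * M := by
      refine Finset.sup'_le _ _ fun i _ => ?_
      rw [hptwise i, abs_mul, abs_of_nonneg hγ0]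
      refine mul_le_mul_of_nonneg_left ?_ hγ0
      calc |∑ k, P i k * d k| ≤ ∑ k, |P i k * d k| := Finset.abs_sum_le_sum_abs _ _
        _ ≤ ∑ k, P i k * M := by
            refine Finset.sum_le_sum fun k _ => ?_
            rw [abs_mul, abs_of_nonneg (hP.1 i k)]
            exact mul_le_mul_of_nonneg_left (hle k) (hP.1 i k)
        _ = M := by rw [← Finset.sum_mul, hP.2 i, one_mul]
    have hMzero : M ≤ 0 := by nlinarith
    refine hne (funext fun i => ?_)
    have h2 : |d i| ≤ 0 := le_trans (hle i) hMzero
    simpa [abs_nonpos_iff] using h2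
  have h0 : ((1 : Matrix (Fin n) (Fin n) ℝ) - γ • P).mulVec (x - y) = 0 := by
    rw [Matrix.mulVec_sub, hxy, sub_self]
  exact sub_eq_zero.mp (hd _ h0)

lemma value_fixed (hP : RowStochastic P) (hγ0 : 0 ≤ γ) (hγ1 : γ < 1) (i : Fin n) :
    valueV γ P r i = r i + γ * ∑ k, P i k * valueV γ P r k := by
  have hu := isUnit_one_sub hP hγ0 hγ1 (P := P)
  have h : ((1 : Matrix (Fin n) (Fin n) ℝ) - γ • P).mulVec (valueV γ P r) = r := by
    rw [valueV, Matrix.mulVec_mulVec,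
      Matrix.mul_nonsing_inv _ ((Matrix.isUnit_iff_isUnit_det _).1 hu), Matrix.one_mulVec]
  rw [Matrix.sub_mulVec, Matrix.one_mulVec, Matrix.smul_mulVec] at h
  have h2 := congrFun h i
  simp only [Pi.sub_apply, Pi.smul_apply, smul_eq_mul, Matrix.mulVec, dotProduct] at h2
  linarith [h2]

lemma value_bound (hn : 1 ≤ n) (hP : RowStochastic P) (hγ0 : 0 ≤ γ) (hγ1 : γ < 1)
    (hr : ∀ i, |r i| ≤ R) (i : Fin n) : |valueV γ P r i| ≤ R / (1 - γ) := by
  haveI : Nonempty (Fin n) := ⟨⟨0, hn⟩⟩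
  have hv : True := trivial
  set M := Finset.univ.sup' Finset.univ_nonempty (fun i => |valueV γ P r i|) with hM
  have hle : ∀ i, |valueV γ P r i| ≤ M := fun i => Finset.le_sup' (fun i => |valueV γ P r i|) (Finset.mem_univ i)
  have hbound : M ≤ R + γ * M := by
    refine Finset.sup'_le _ _ fun i _ => ?_
    rw [value_fixed hP hγ0 hγ1 i]
    calc |r i + γ * ∑ k, P i k * valueV γ P r k| ≤ |r i| + |γ * ∑ k, P i k * valueV γ P r k| := abs_add_le _ _
      _ ≤ R + γ * M := by
          refine add_le_add (hr i) ?_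
          rw [abs_mul, abs_of_nonneg hγ0]
          refine mul_le_mul_of_nonneg_left ?_ hγ0
          calc |∑ k, P i k * valueV γ P r k| ≤ ∑ k, |P i k * valueV γ P r k| := Finset.abs_sum_le_sum_abs _ _
            _ ≤ ∑ k, P i k * M := by
                refine Finset.sum_le_sum fun k _ => ?_
                rw [abs_mul, abs_of_nonneg (hP.1 i k)]
                exact mul_le_mul_of_nonneg_left (hle k) (hP.1 i k)
            _ = M := by rw [← Finset.sum_mul, hP.2 i, one_mul]
  have hγpos : 0 < 1 - γ := by linarith
  have hMle : M ≤ R / (1 - γ) := by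
    rw [le_div_iff₀ hγpos]; nlinarith
  exact le_trans (hle i) hMle

lemma tdW_err (hn : 1 ≤ n) (hP : RowStochastic P) (hγ0 : 0 ≤ γ) (hγ1 : γ < 1)
    (hr : ∀ i, |r i| ≤ R) :
    ∀ (L : ℕ) (i : Fin n), |valueV γ P r i - tdW γ P r L i| ≤ γ ^ L * (R / (1 - γ)) := by
  intro L
  induction L with
  | zero =>
    intro i
    simpa [tdW] using value_bound hn hP hγ0 hγ1 hr i
  | succ L ih =>
    intro i
    have hdiff : valueV γ P r i - tdW γ P r (L+1) i
        = γ * ∑ k, P i k * (valueV γ P r k - tdW γ P r L k) := by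
      rw [value_fixed hP hγ0 hγ1 i]
      simp only [tdW, Pi.add_apply, Pi.smul_apply, smul_eq_mul, Matrix.mulVec, dotProduct,
        mul_sub, Finset.sum_sub_distrib, Finset.mul_sum]
      ring
    rw [hdiff, abs_mul, abs_of_nonneg hγ0, pow_succ, mul_comm (γ ^ L) γ, mul_assoc]
    refine mul_le_mul_of_nonneg_left ?_ hγ0
    calc |∑ k, P i k * (valueV γ P r k - tdW γ P r L k)|
        ≤ ∑ k, |P i k * (valueV γ P r k - tdW γ P r L k)| := Finset.abs_sum_le_sum_abs _ _
      _ ≤ ∑ k, P i k * (γ ^ L * (R / (1 - γ))) := by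
          refine Finset.sum_le_sum fun k _ => ?_
          rw [abs_mul, abs_of_nonneg (hP.1 i k)]
          exact mul_le_mul_of_nonneg_left (ih k) (hP.1 i k)
      _ = γ ^ L * (R / (1 - γ)) := by rw [← Finset.sum_mul, hP.2 i, one_mul]

end Stmt19
namespace Stmt19

variable {n : ℕ} {γ R : ℝ} {P : Matrix (Fin n) (Fin n) ℝ} {r : Fin n → ℝ} {j : Fin n}

/-- The derivative recursion for the bottom row under a linear perturbation of parameters. -/
def Dd (γ : ℝ) (P : Matrix (Fin n) (Fin n) ℝ) (r : Fin n → ℝ) (j : Fin n)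
    (A0 E : Matrix (TwoN n) (TwoN n) ℝ) (u0 w : Matrix Unit (TwoN n) ℝ) : ℕ → CIdx n → ℝ
  | 0 => fun _ => 0
  | l + 1 => fun c' => Dd γ P r j A0 E u0 w l c' + ∑ i,
      (((∑ a, w () a * topZ γ P j a (Sum.inl i)) + Dd γ P r j A0 E u0 w l (Sum.inl i))
          * Sm γ P j A0 (Sum.inl i) c'
        + ((∑ a, u0 () a * topZ γ P j a (Sum.inl i)) + bot γ P r j A0 u0 l (Sum.inl i))
          * Sm γ P j E (Sum.inl i) c')

lemma Sm_add_smul (A0 E : Matrix (TwoN n) (TwoN n) ℝ) (t : ℝ) (c c' : CIdx n) :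
    Sm γ P j (A0 + t • E) c c' = Sm γ P j A0 c c' + t * Sm γ P j E c c' := by
  unfold Sm
  rw [Finset.mul_sum, ← Finset.sum_add_distrib]
  refine Finset.sum_congr rfl fun b _ => ?_
  have e : (∑ a, topZ γ P j a c * (A0 + t • E) a b)
      = (∑ a, topZ γ P j a c * A0 a b) + t * (∑ a, topZ γ P j a c * E a b) := by
    rw [Finset.mul_sum, ← Finset.sum_add_distrib]
    refine Finset.sum_congr rfl fun a _ => ?_
    simp [Matrix.add_apply]; ring
  rw [e]; ring

lemma hasDerivAt_bot (A0 E : Matrix (TwoN n) (TwoN n) ℝ) (u0 w : Matrix Unit (TwoN n) ℝ)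
    (l : ℕ) (c : CIdx n) :
    HasDerivAt (fun t : ℝ => bot γ P r j (A0 + t • E) (u0 + t • w) l c)
      (Dd γ P r j A0 E u0 w l c) 0 := by
  induction l generalizing c with
  | zero =>
    show HasDerivAt (fun _ : ℝ => Sum.elim r (fun _ => (0:ℝ)) c) _ 0
    simpa [Dd] using hasDerivAt_const (0:ℝ) (Sum.elim r (fun _ => (0:ℝ)) c)
  | succ l ih =>
    have hf : ∀ i : Fin n, HasDerivAt
        (fun t : ℝ => (∑ a, (u0 + t • w) () a * topZ γ P j a (Sum.inl i))
          + bot γ P r j (A0 + t • E) (u0 + t • w) l (Sum.inl i))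
        ((∑ a, w () a * topZ γ P j a (Sum.inl i)) + Dd γ P r j A0 E u0 w l (Sum.inl i)) 0 := by
      intro i
      refine HasDerivAt.add ?_ (ih (Sum.inl i))
      refine HasDerivAt.fun_sum fun a _ => ?_
      have h1 : HasDerivAt (fun t : ℝ => (u0 () a + t * w () a) * topZ γ P j a (Sum.inl i))
          (w () a * topZ γ P j a (Sum.inl i)) 0 := by
        simpa [mul_comm] using (((hasDerivAt_id (0:ℝ)).const_mul (w () a)).const_add
          (u0 () a)).mul_const (topZ γ P j a (Sum.inl i))
      exact h1
    have hg : ∀ i : Fin n, HasDerivAt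
        (fun t : ℝ => Sm γ P j (A0 + t • E) (Sum.inl i) c)
        (Sm γ P j E (Sum.inl i) c) 0 := by
      intro i
      have e : (fun t : ℝ => Sm γ P j (A0 + t • E) (Sum.inl i) c)
          = fun t : ℝ => Sm γ P j A0 (Sum.inl i) c + t * Sm γ P j E (Sum.inl i) c :=
        funext fun t => Sm_add_smul A0 E t _ _
      rw [e]
      simpa [mul_comm] using ((hasDerivAt_id (0:ℝ)).const_mul
        (Sm γ P j E (Sum.inl i) c)).const_add (Sm γ P j A0 (Sum.inl i) c)
    have h := HasDerivAt.add (ih c) (HasDerivAt.fun_sum (u := Finset.univ) fun i _ => (hf i).mul (hg i))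
    show HasDerivAt (fun t : ℝ => bot γ P r j (A0 + t • E) (u0 + t • w) l c + ∑ i,
        ((∑ a, (u0 + t • w) () a * topZ γ P j a (Sum.inl i))
          + bot γ P r j (A0 + t • E) (u0 + t • w) l (Sum.inl i))
        * Sm γ P j (A0 + t • E) (Sum.inl i) c)
      (Dd γ P r j A0 E u0 w (l+1) c) 0
    have hD : Dd γ P r j A0 E u0 w (l+1) c = Dd γ P r j A0 E u0 w l c + ∑ i,
        (((∑ a, w () a * topZ γ P j a (Sum.inl i)) + Dd γ P r j A0 E u0 w l (Sum.inl i))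
            * Sm γ P j (A0 + (0:ℝ) • E) (Sum.inl i) c
          + ((∑ a, (u0 + (0:ℝ) • w) () a * topZ γ P j a (Sum.inl i))
              + bot γ P r j (A0 + (0:ℝ) • E) (u0 + (0:ℝ) • w) l (Sum.inl i))
            * Sm γ P j E (Sum.inl i) c) := by
      simp [Dd]
    rw [hD]
    exact h

lemma gvec_eq_A (L : ℕ) (ab : TwoN n × TwoN n) :
    gvec γ P r L j (Sum.inl ab)
      = -(Dd γ P r j (Atd n) (Matrix.single ab.1 ab.2 1) 0 0 L (Sum.inr ())) := by
  show deriv (fun t : ℝ =>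
      tfOut γ P r j (Atd n + t • Matrix.single ab.1 ab.2 1) 0 L) 0 = _
  have e : (fun t : ℝ => tfOut γ P r j (Atd n + t • Matrix.single ab.1 ab.2 1) 0 L)
      = fun t : ℝ => -(bot γ P r j (Atd n + t • Matrix.single ab.1 ab.2 1)
          ((0 : Matrix Unit (TwoN n) ℝ) + t • (0 : Matrix Unit (TwoN n) ℝ)) L (Sum.inr ())) := by
    funext t; rw [tfOut_eq]; simp
  rw [e]
  exact (HasDerivAt.neg (hasDerivAt_bot _ _ _ _ L (Sum.inr ()))).deriv

lemma gvec_eq_u (L : ℕ) (k : TwoN n) :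
    gvec γ P r L j (Sum.inr k)
      = -(Dd γ P r j (Atd n) 0 0 (Matrix.single () k 1) L (Sum.inr ())) := by
  show deriv (fun t : ℝ =>
      tfOut γ P r j (Atd n) (t • Matrix.single () k 1) L) 0 = _
  have e : (fun t : ℝ => tfOut γ P r j (Atd n) (t • Matrix.single () k 1) L)
      = fun t : ℝ => -(bot γ P r j (Atd n + t • (0 : Matrix (TwoN n) (TwoN n) ℝ))
          ((0 : Matrix Unit (TwoN n) ℝ) + t • Matrix.single () k 1) L (Sum.inr ())) := by
    funext t; rw [tfOut_eq]; simp
  rw [e]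
  exact (HasDerivAt.neg (hasDerivAt_bot _ _ _ _ L (Sum.inr ()))).deriv

end Stmt19
namespace Stmt19

variable {n : ℕ} {γ R : ℝ} {P : Matrix (Fin n) (Fin n) ℝ} {r : Fin n → ℝ} {j : Fin n}

lemma P_entry_le_one (hP : RowStochastic P) (i k : Fin n) : P i k ≤ 1 := by
  have := Finset.single_le_sum (f := P i) (fun k _ => hP.1 i k) (Finset.mem_univ k)
  rw [hP.2 i] at this
  exact this

lemma abs_topZ_le (hP : RowStochastic P) (hγ0 : 0 ≤ γ) (hγ1 : γ ≤ 1)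
    (a : TwoN n) (c : CIdx n) : |topZ γ P j a c| ≤ 1 := by
  cases a with
  | inl k =>
    cases c <;> · show |(if k = _ then (1:ℝ) else 0)| ≤ 1; split <;> norm_num
  | inr k =>
    cases c with
    | inl i =>
      show |γ * P i k| ≤ 1
      rw [abs_mul, abs_of_nonneg hγ0, abs_of_nonneg (hP.1 i k)]
      exact mul_le_one₀ hγ1 (hP.1 i k) (P_entry_le_one hP i k)
    | inr z => show |(0:ℝ)| ≤ 1; norm_num

lemma Sm_zero (c c' : CIdx n) : Sm γ P j (0 : Matrix (TwoN n) (TwoN n) ℝ) c c' = 0 := by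
  simp [Sm]

lemma Sm_stdBasis (a b : TwoN n) (c c' : CIdx n) :
    Sm γ P j (Matrix.single a b 1) c c' = topZ γ P j a c * topZ γ P j b c' := by
  simp [Sm, Matrix.single, mul_ite, mul_one, mul_zero, ite_mul, zero_mul, ite_and,
    Finset.sum_ite_eq, Finset.sum_ite_eq']

lemma sum_stdBasis_mul (k : TwoN n) (i : Fin n) :
    (∑ a, Matrix.single () k (1:ℝ) () a * topZ γ P j a (Sum.inl i))
      = topZ γ P j k (Sum.inl i) := by
  simp [Matrix.single, ite_mul, one_mul, zero_mul, ite_and, Finset.sum_ite_eq,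
    Finset.sum_ite_eq']

lemma Dd_ctx_succ (E : Matrix (TwoN n) (TwoN n) ℝ) (w : Matrix Unit (TwoN n) ℝ)
    (l : ℕ) (i' : Fin n) :
    Dd γ P r j (Atd n) E 0 w (l+1) (Sum.inl i')
      = -(∑ a, w () a * topZ γ P j a (Sum.inl i'))
        + γ * ∑ i, P i' i * ((∑ a, w () a * topZ γ P j a (Sum.inl i))
            + Dd γ P r j (Atd n) E 0 w l (Sum.inl i))
        + ∑ i, bot γ P r j (Atd n) 0 l (Sum.inl i) * Sm γ P j E (Sum.inl i) (Sum.inl i') := by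
  have e : ∀ i : Fin n,
      (((∑ a, w () a * topZ γ P j a (Sum.inl i)) + Dd γ P r j (Atd n) E 0 w l (Sum.inl i))
          * Sm γ P j (Atd n) (Sum.inl i) (Sum.inl i')
        + ((∑ a, (0 : Matrix Unit (TwoN n) ℝ) () a * topZ γ P j a (Sum.inl i))
            + bot γ P r j (Atd n) 0 l (Sum.inl i)) * Sm γ P j E (Sum.inl i) (Sum.inl i'))
      = (if i = i' then -((∑ a, w () a * topZ γ P j a (Sum.inl i))
            + Dd γ P r j (Atd n) E 0 w l (Sum.inl i)) else 0)
        + γ * (P i' i * ((∑ a, w () a * topZ γ P j a (Sum.inl i))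
            + Dd γ P r j (Atd n) E 0 w l (Sum.inl i)))
        + bot γ P r j (Atd n) 0 l (Sum.inl i) * Sm γ P j E (Sum.inl i) (Sum.inl i') := by
    intro i; rw [Sm_Atd_ctx]; simp only [Matrix.zero_apply, zero_mul,
      Finset.sum_const_zero, zero_add]; split <;> ring
  show Dd γ P r j (Atd n) E 0 w l (Sum.inl i') + ∑ i, _ = _
  rw [Finset.sum_congr rfl fun i _ => e i, Finset.sum_add_distrib, Finset.sum_add_distrib,
    Finset.sum_ite_eq' Finset.univ i', ← Finset.mul_sum]
  simp only [Finset.mem_univ, if_true]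
  ring

lemma Dd_q_succ (E : Matrix (TwoN n) (TwoN n) ℝ) (w : Matrix Unit (TwoN n) ℝ) (l : ℕ) :
    Dd γ P r j (Atd n) E 0 w (l+1) (Sum.inr ())
      = Dd γ P r j (Atd n) E 0 w l (Sum.inr ())
        - ((∑ a, w () a * topZ γ P j a (Sum.inl j)) + Dd γ P r j (Atd n) E 0 w l (Sum.inl j))
        + ∑ i, bot γ P r j (Atd n) 0 l (Sum.inl i) * Sm γ P j E (Sum.inl i) (Sum.inr ()) := by
  have e : ∀ i : Fin n,
      (((∑ a, w () a * topZ γ P j a (Sum.inl i)) + Dd γ P r j (Atd n) E 0 w l (Sum.inl i))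
          * Sm γ P j (Atd n) (Sum.inl i) (Sum.inr ())
        + ((∑ a, (0 : Matrix Unit (TwoN n) ℝ) () a * topZ γ P j a (Sum.inl i))
            + bot γ P r j (Atd n) 0 l (Sum.inl i)) * Sm γ P j E (Sum.inl i) (Sum.inr ()))
      = (if i = j then -((∑ a, w () a * topZ γ P j a (Sum.inl i))
            + Dd γ P r j (Atd n) E 0 w l (Sum.inl i)) else 0)
        + bot γ P r j (Atd n) 0 l (Sum.inl i) * Sm γ P j E (Sum.inl i) (Sum.inr ()) := by
    intro i; rw [Sm_Atd_q]; simp only [Matrix.zero_apply, zero_mul,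
      Finset.sum_const_zero, zero_add]; split <;> ring
  show Dd γ P r j (Atd n) E 0 w l (Sum.inr ()) + ∑ i, _ = _
  rw [Finset.sum_congr rfl fun i _ => e i, Finset.sum_add_distrib,
    Finset.sum_ite_eq' Finset.univ j]
  simp only [Finset.mem_univ, if_true]
  ring

section bounds

variable {E : Matrix (TwoN n) (TwoN n) ℝ} {w : Matrix Unit (TwoN n) ℝ}

lemma Dd_ctx_bound (hP : RowStochastic P) (hγ0 : 0 ≤ γ) (hγ1 : γ < 1)
    (hr : ∀ i, |r i| ≤ R) (hR0 : 0 ≤ R)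
    (hw : ∀ i : Fin n, |∑ a, w () a * topZ γ P j a (Sum.inl i)| ≤ 1)
    (hE : ∀ (i : Fin n) (c : CIdx n), |Sm γ P j E (Sum.inl i) c| ≤ 1) :
    ∀ (l : ℕ) (i : Fin n), |Dd γ P r j (Atd n) E 0 w l (Sum.inl i)|
      ≤ (1 + γ + n * R) / (1 - γ) := by
  have hγpos : 0 < 1 - γ := by linarith
  have hnum : 0 ≤ 1 + γ + n * R := by positivity
  set K1 := (1 + γ + n * R) / (1 - γ) with hK1
  have hK10 : 0 ≤ K1 := div_nonneg hnum (le_of_lt hγpos)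
  have hK1eq : (1 - γ) * K1 = 1 + γ + n * R := by
    rw [hK1]; field_simp
  intro l
  induction l with
  | zero => intro i; simp [Dd, hK10]
  | succ l ih =>
    intro i'
    rw [Dd_ctx_succ]
    have h1 : |γ * ∑ i, P i' i * ((∑ a, w () a * topZ γ P j a (Sum.inl i))
        + Dd γ P r j (Atd n) E 0 w l (Sum.inl i))| ≤ γ * (1 + K1) := by
      rw [abs_mul, abs_of_nonneg hγ0]
      refine mul_le_mul_of_nonneg_left ?_ hγ0
      calc |∑ i, P i' i * ((∑ a, w () a * topZ γ P j a (Sum.inl i))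
            + Dd γ P r j (Atd n) E 0 w l (Sum.inl i))|
          ≤ ∑ i, |P i' i * ((∑ a, w () a * topZ γ P j a (Sum.inl i))
            + Dd γ P r j (Atd n) E 0 w l (Sum.inl i))| := Finset.abs_sum_le_sum_abs _ _
        _ ≤ ∑ i, P i' i * (1 + K1) := by
            refine Finset.sum_le_sum fun i _ => ?_
            rw [abs_mul, abs_of_nonneg (hP.1 i' i)]
            refine mul_le_mul_of_nonneg_left ?_ (hP.1 i' i)
            calc |(∑ a, w () a * topZ γ P j a (Sum.inl i))
                  + Dd γ P r j (Atd n) E 0 w l (Sum.inl i)|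
                ≤ |∑ a, w () a * topZ γ P j a (Sum.inl i)|
                  + |Dd γ P r j (Atd n) E 0 w l (Sum.inl i)| := abs_add_le _ _
              _ ≤ 1 + K1 := add_le_add (hw i) (ih i)
        _ = 1 + K1 := by rw [← Finset.sum_mul, hP.2 i', one_mul]
    have h2 : |∑ i, bot γ P r j (Atd n) 0 l (Sum.inl i)
        * Sm γ P j E (Sum.inl i) (Sum.inl i')| ≤ n * R := by
      calc |∑ i, bot γ P r j (Atd n) 0 l (Sum.inl i) * Sm γ P j E (Sum.inl i) (Sum.inl i')|
          ≤ ∑ i, |bot γ P r j (Atd n) 0 l (Sum.inl i) * Sm γ P j E (Sum.inl i) (Sum.inl i')| :=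
            Finset.abs_sum_le_sum_abs _ _
        _ ≤ ∑ _i : Fin n, R := by
            refine Finset.sum_le_sum fun i _ => ?_
            rw [abs_mul]
            calc |bot γ P r j (Atd n) 0 l (Sum.inl i)| * |Sm γ P j E (Sum.inl i) (Sum.inl i')|
                ≤ R * 1 := mul_le_mul (bot_td_ctx_bound hP hγ0 (le_of_lt hγ1) hr hR0 l i)
                  (hE i _) (abs_nonneg _) hR0
              _ = R := mul_one R
        _ = n * R := by rw [Finset.sum_const, Finset.card_univ, Fintype.card_fin,
            nsmul_eq_mul]
    calc |-(∑ a, w () a * topZ γ P j a (Sum.inl i'))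
          + γ * ∑ i, P i' i * ((∑ a, w () a * topZ γ P j a (Sum.inl i))
            + Dd γ P r j (Atd n) E 0 w l (Sum.inl i))
          + ∑ i, bot γ P r j (Atd n) 0 l (Sum.inl i) * Sm γ P j E (Sum.inl i) (Sum.inl i')|
        ≤ |-(∑ a, w () a * topZ γ P j a (Sum.inl i'))
          + γ * ∑ i, P i' i * ((∑ a, w () a * topZ γ P j a (Sum.inl i))
            + Dd γ P r j (Atd n) E 0 w l (Sum.inl i))|
          + |∑ i, bot γ P r j (Atd n) 0 l (Sum.inl i) * Sm γ P j E (Sum.inl i) (Sum.inl i')| :=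
          abs_add_le _ _
      _ ≤ (|∑ a, w () a * topZ γ P j a (Sum.inl i')|
            + |γ * ∑ i, P i' i * ((∑ a, w () a * topZ γ P j a (Sum.inl i))
              + Dd γ P r j (Atd n) E 0 w l (Sum.inl i))|) + n * R := by
          refine add_le_add (le_trans (abs_add_le _ _) (by rw [abs_neg])) h2
      _ ≤ (1 + γ * (1 + K1)) + n * R := by
          refine add_le_add_left (add_le_add (hw i') h1) _
      _ ≤ K1 := by nlinarith [hK1eq]
  
lemma Dd_q_bound (hP : RowStochastic P) (hγ0 : 0 ≤ γ) (hγ1 : γ < 1)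
    (hr : ∀ i, |r i| ≤ R) (hR0 : 0 ≤ R)
    (hw : ∀ i : Fin n, |∑ a, w () a * topZ γ P j a (Sum.inl i)| ≤ 1)
    (hE : ∀ (i : Fin n) (c : CIdx n), |Sm γ P j E (Sum.inl i) c| ≤ 1) :
    ∀ l : ℕ, |Dd γ P r j (Atd n) E 0 w l (Sum.inr ())|
      ≤ l * (1 + (1 + γ + n * R) / (1 - γ) + n * R) := by
  have hγpos : 0 < 1 - γ := by linarith
  set K1 := (1 + γ + n * R) / (1 - γ) with hK1
  have hK10 : 0 ≤ K1 := div_nonneg (by positivity) (le_of_lt hγpos)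
  intro l
  induction l with
  | zero => simp [Dd]
  | succ l ih =>
    rw [Dd_q_succ]
    have h2 : |∑ i, bot γ P r j (Atd n) 0 l (Sum.inl i)
        * Sm γ P j E (Sum.inl i) (Sum.inr ())| ≤ n * R := by
      calc |∑ i, bot γ P r j (Atd n) 0 l (Sum.inl i) * Sm γ P j E (Sum.inl i) (Sum.inr ())|
          ≤ ∑ i, |bot γ P r j (Atd n) 0 l (Sum.inl i) * Sm γ P j E (Sum.inl i) (Sum.inr ())| :=
            Finset.abs_sum_le_sum_abs _ _
        _ ≤ ∑ _i : Fin n, R := by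
            refine Finset.sum_le_sum fun i _ => ?_
            rw [abs_mul]
            calc |bot γ P r j (Atd n) 0 l (Sum.inl i)| * |Sm γ P j E (Sum.inl i) (Sum.inr ())|
                ≤ R * 1 := mul_le_mul (bot_td_ctx_bound hP hγ0 (le_of_lt hγ1) hr hR0 l i)
                  (hE i _) (abs_nonneg _) hR0
              _ = R := mul_one R
        _ = n * R := by rw [Finset.sum_const, Finset.card_univ, Fintype.card_fin,
            nsmul_eq_mul]
    have h3 : |(∑ a, w () a * topZ γ P j a (Sum.inl j))
        + Dd γ P r j (Atd n) E 0 w l (Sum.inl j)| ≤ 1 + K1 :=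
      le_trans (abs_add_le _ _)
        (add_le_add (hw j) (Dd_ctx_bound hP hγ0 hγ1 hr hR0 hw hE l j))
    have := abs_add_le (Dd γ P r j (Atd n) E 0 w l (Sum.inr ())
        - ((∑ a, w () a * topZ γ P j a (Sum.inl j)) + Dd γ P r j (Atd n) E 0 w l (Sum.inl j)))
      (∑ i, bot γ P r j (Atd n) 0 l (Sum.inl i) * Sm γ P j E (Sum.inl i) (Sum.inr ()))
    have h4 := abs_sub (Dd γ P r j (Atd n) E 0 w l (Sum.inr ()))
      ((∑ a, w () a * topZ γ P j a (Sum.inl j)) + Dd γ P r j (Atd n) E 0 w l (Sum.inl j))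
    push_cast
    nlinarith [ih]

end bounds

end Stmt19
namespace Stmt19

variable {n : ℕ} {γ R : ℝ} {P : Matrix (Fin n) (Fin n) ℝ} {r : Fin n → ℝ} {j : Fin n}

lemma gvec_bound (hP : RowStochastic P) (hγ0 : 0 ≤ γ) (hγ1 : γ < 1)
    (hr : ∀ i, |r i| ≤ R) (hR0 : 0 ≤ R) (L : ℕ) (idx : (TwoN n × TwoN n) ⊕ TwoN n) :
    |gvec γ P r L j idx| ≤ ((L:ℝ) + 1) * (1 + (1 + γ + n * R) / (1 - γ) + n * R) := by
  have hγpos : 0 < 1 - γ := by linarith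
  have hK20 : 0 ≤ 1 + (1 + γ + n * R) / (1 - γ) + n * R := by
    have h1 : (0:ℝ) ≤ (1 + γ + n * R) / (1 - γ) := div_nonneg (by positivity) (le_of_lt hγpos)
    have h2 : (0:ℝ) ≤ (n:ℝ) * R := by positivity
    linarith
  have hstep : ∀ E w, (∀ i : Fin n, |∑ a, w () a * topZ γ P j a (Sum.inl i)| ≤ 1) →
      (∀ (i : Fin n) (c : CIdx n), |Sm γ P j E (Sum.inl i) c| ≤ 1) →
      |Dd γ P r j (Atd n) E 0 w L (Sum.inr ())|
        ≤ ((L:ℝ) + 1) * (1 + (1 + γ + n * R) / (1 - γ) + n * R) := by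
    intro E w hw hE
    refine le_trans (Dd_q_bound hP hγ0 hγ1 hr hR0 hw hE L) ?_
    nlinarith [hK20]
  cases idx with
  | inl ab =>
    rw [gvec_eq_A, abs_neg]
    refine hstep _ _ (fun i => by simp) (fun i c => ?_)
    rw [Sm_stdBasis, abs_mul]
    exact mul_le_one₀ (abs_topZ_le hP hγ0 (le_of_lt hγ1) _ _) (abs_nonneg _)
      (abs_topZ_le hP hγ0 (le_of_lt hγ1) _ _)
  | inr k =>
    rw [gvec_eq_u, abs_neg]
    refine hstep _ _ (fun i => ?_) (fun i c => by simp [Sm_zero])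
    rw [sum_stdBasis_mul]
    exact abs_topZ_le hP hγ0 (le_of_lt hγ1) _ _

end Stmt19
open Stmt19 in
/-- Corollary 1: the ℓ1 norm of the expected multi-task Monte Carlo
update of the looped transformer evaluated at the TD parameters tends to 0 as L → ∞. -/
theorem stmt19 (n : ℕ) (hn : 1 ≤ n) (γ : ℝ) (hγ0 : 0 ≤ γ) (hγ1 : γ < 1)
    (R : ℝ) (hR : 0 < R)
    (μ : MeasureTheory.Measure (Matrix (Fin n) (Fin n) ℝ × (Fin n → ℝ)))
    [MeasureTheory.IsProbabilityMeasure μ]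
    (ρ : Matrix (Fin n) (Fin n) ℝ → (Fin n → ℝ)) (hρmeas : Measurable ρ)
    (hae : ∀ᵐ pr ∂μ, RowStochastic pr.1 ∧ ‖pr.2‖ ≤ R
      ∧ (∀ ω, 0 ≤ ρ pr.1 ω) ∧ (∑ ω, ρ pr.1 ω) = 1
      ∧ pr.1ᵀ.mulVec (ρ pr.1) = ρ pr.1) :
    Tendsto (fun L : ℕ => ∑ idx : (TwoN n × TwoN n) ⊕ TwoN n,
        |(∫ pr, (∑ ω, (ρ pr.1 ω *
              (valueV γ pr.1 pr.2 ω - tfTD γ pr.1 pr.2 ω L)) •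
            gvec γ pr.1 pr.2 L ω) ∂μ) idx|)
      atTop (𝓝 0) := by
  classical
  have hγpos : 0 < 1 - γ := by linarith
  set K2 : ℝ := 1 + (1 + γ + n * R) / (1 - γ) + n * R with hK2
  have hK20 : 0 ≤ K2 := by
    have h1 : (0:ℝ) ≤ (1 + γ + n * R) / (1 - γ) := div_nonneg (by positivity) (le_of_lt hγpos)
    have h2 : (0:ℝ) ≤ (n:ℝ) * R := by positivity
    rw [hK2]; linarith
  set B : ℝ := R / (1 - γ) with hB
  have hB0 : 0 ≤ B := div_nonneg (le_of_lt hR) (le_of_lt hγpos)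
  set N : ℝ := (Fintype.card ((TwoN n × TwoN n) ⊕ TwoN n) : ℝ) with hN
  have key : ∀ (L : ℕ) (idx : (TwoN n × TwoN n) ⊕ TwoN n),
      |(∫ pr, (∑ ω, (ρ pr.1 ω *
              (valueV γ pr.1 pr.2 ω - tfTD γ pr.1 pr.2 ω L)) •
            gvec γ pr.1 pr.2 L ω) ∂μ) idx| ≤ γ ^ L * B * (((L:ℝ) + 1) * K2) := by
    intro L idx
    have hc0 : 0 ≤ γ ^ L * B * (((L:ℝ) + 1) * K2) := by positivity
    have hnorm : ‖∫ pr, (∑ ω, (ρ pr.1 ω *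
              (valueV γ pr.1 pr.2 ω - tfTD γ pr.1 pr.2 ω L)) •
            gvec γ pr.1 pr.2 L ω) ∂μ‖ ≤ γ ^ L * B * (((L:ℝ) + 1) * K2) * (μ Set.univ).toReal := by
      refine MeasureTheory.norm_integral_le_of_norm_le_const ?_
      filter_upwards [hae] with pr hpr
      obtain ⟨hPs, hrn, hρ0, hρ1, _⟩ := hpr
      have hr' : ∀ i, |pr.2 i| ≤ R := fun i =>
        le_trans (by rw [← Real.norm_eq_abs]; exact norm_le_pi_norm pr.2 i) hrn
      rw [pi_norm_le_iff_of_nonneg hc0]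
      intro idx'
      rw [Real.norm_eq_abs]
      have happ : (∑ ω, (ρ pr.1 ω *
              (valueV γ pr.1 pr.2 ω - tfTD γ pr.1 pr.2 ω L)) •
            gvec γ pr.1 pr.2 L ω) idx'
          = ∑ ω, (ρ pr.1 ω * (valueV γ pr.1 pr.2 ω - tfTD γ pr.1 pr.2 ω L))
              * gvec γ pr.1 pr.2 L ω idx' := by
        simp [Finset.sum_apply, Pi.smul_apply, smul_eq_mul]
      rw [happ]
      calc |∑ ω, (ρ pr.1 ω * (valueV γ pr.1 pr.2 ω - tfTD γ pr.1 pr.2 ω L))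
              * gvec γ pr.1 pr.2 L ω idx'|
          ≤ ∑ ω, |(ρ pr.1 ω * (valueV γ pr.1 pr.2 ω - tfTD γ pr.1 pr.2 ω L))
              * gvec γ pr.1 pr.2 L ω idx'| := Finset.abs_sum_le_sum_abs _ _
        _ ≤ ∑ ω, ρ pr.1 ω * (γ ^ L * B * (((L:ℝ) + 1) * K2)) := by
            refine Finset.sum_le_sum fun ω _ => ?_
            rw [abs_mul, abs_mul, abs_of_nonneg (hρ0 ω), mul_assoc]
            refine mul_le_mul_of_nonneg_left ?_ (hρ0 ω)
            have h1 : |valueV γ pr.1 pr.2 ω - tfTD γ pr.1 pr.2 ω L| ≤ γ ^ L * B := by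
              rw [tfTD_eq, hB]
              exact tdW_err hn hPs hγ0 hγ1 hr' L ω
            have h2 : |gvec γ pr.1 pr.2 L ω idx'| ≤ ((L:ℝ) + 1) * K2 := by
              rw [hK2]
              exact gvec_bound hPs hγ0 hγ1 hr' (le_of_lt hR) L idx'
            exact mul_le_mul h1 h2 (abs_nonneg _) (by positivity)
        _ = γ ^ L * B * (((L:ℝ) + 1) * K2) := by rw [← Finset.sum_mul, hρ1, one_mul]
    have h := le_trans (norm_le_pi_norm _ idx) hnorm
    simpa [Real.norm_eq_abs, MeasureTheory.measure_univ] using h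
  refine squeeze_zero (fun L => Finset.sum_nonneg fun idx _ => abs_nonneg _)
    (g := fun L : ℕ => N * (γ ^ L * B * (((L:ℝ) + 1) * K2))) (fun L => ?_) ?_
  · calc (∑ idx : (TwoN n × TwoN n) ⊕ TwoN n,
        |(∫ pr, (∑ ω, (ρ pr.1 ω *
              (valueV γ pr.1 pr.2 ω - tfTD γ pr.1 pr.2 ω L)) •
            gvec γ pr.1 pr.2 L ω) ∂μ) idx|)
        ≤ ∑ _idx : (TwoN n × TwoN n) ⊕ TwoN n, γ ^ L * B * (((L:ℝ) + 1) * K2) :=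
          Finset.sum_le_sum fun idx _ => key L idx
      _ = N * (γ ^ L * B * (((L:ℝ) + 1) * K2)) := by
          rw [Finset.sum_const, Finset.card_univ, nsmul_eq_mul, hN]
  · have hlt : ‖γ‖ < 1 := by rwa [Real.norm_eq_abs, abs_of_nonneg hγ0]
    have hs : Summable (fun L : ℕ => ((L:ℝ)) ^ 1 * γ ^ L) :=
      (summable_norm_pow_mul_geometric_of_norm_lt_one 1 hlt).of_norm
    have h1 : Tendsto (fun L : ℕ => (L:ℝ) * γ ^ L) atTop (𝓝 0) := by
      simpa [pow_one] using hs.tendsto_atTop_zero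
    have h2 : Tendsto (fun L : ℕ => γ ^ L) atTop (𝓝 0) :=
      tendsto_pow_atTop_nhds_zero_of_lt_one hγ0 hγ1
    have h3 : Tendsto (fun L : ℕ => ((L:ℝ) + 1) * γ ^ L) atTop (𝓝 0) := by
      have h := h1.add h2
      simp only [add_zero] at h
      refine h.congr fun L => ?_
      ring
    have h4 := h3.const_mul (N * B * K2)
    have he : (fun L : ℕ => N * (γ ^ L * B * (((L:ℝ) + 1) * K2)))
        = fun L : ℕ => (N * B * K2) * (((L:ℝ) + 1) * γ ^ L) := funext fun L => by ring
    rw [he]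
    simpa using h4

end
end
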